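/- arXiv:math/9201207 — 5 statements merged into one kernel-verified Lean document; each statement's English description precedes it below -/
import Mathlib

section
/- Let μ be a finite measure on a finite set Ω. Then for every function y : Ω → ℝ, ‖y‖_{2,1} ≤ ‖y‖_∞^{1/2} · ‖y‖_1^{1/2}, where ‖y‖_∞ = max_{ω∈Ω} |y(ω)| and ‖y‖_1 = ∑_{ω∈Ω} |y(ω)| μ({ω}). -/
open scoped BigOperators

open MeasureTheory Set

/-- The Lorentz `L_{2,1}` norm of `f` with respect to the weights `w` on a finite set:
`∫_0^∞ μ(|f| > t)^{1/2} dt`. -/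
noncomputable def lorentz21 {Ω : Type*} [Fintype Ω] (w : Ω → ℝ) (f : Ω → ℝ) : ℝ :=
  ∫ t in Set.Ioi (0 : ℝ), Real.sqrt (∑ ω, if t < |f ω| then w ω else 0)

private lemma aux_sqrt_le {x c : ℝ} (hx : 0 ≤ x) (hc : 0 < c) :
    Real.sqrt x ≤ x / (2 * c) + c / 2 := by
  have h1 : Real.sqrt x * (2 * c) ≤ x + c ^ 2 := by
    nlinarith [Real.sq_sqrt hx, sq_nonneg (Real.sqrt x - c), Real.sqrt_nonneg x]
  have h2 : Real.sqrt x = Real.sqrt x * (2 * c) / (2 * c) := by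
    field_simp
  rw [h2]
  calc Real.sqrt x * (2 * c) / (2 * c) ≤ (x + c ^ 2) / (2 * c) := by
        apply div_le_div_of_nonneg_right h1 (by positivity)
    _ = x / (2 * c) + c / 2 := by field_simp

theorem stmt3 (Ω : Type) [Fintype Ω] (w : Ω → ℝ) (hw : ∀ ω, 0 ≤ w ω) (y : Ω → ℝ) :
    lorentz21 w y ≤ Real.sqrt ‖y‖ * Real.sqrt (∑ ω, |y ω| * w ω) := by
  classical
  set M := ‖y‖ with hMdef
  set S := ∑ ω, |y ω| * w ω with hSdef
  have hS0 : 0 ≤ S := Finset.sum_nonneg fun ω _ => mul_nonneg (abs_nonneg _) (hw ω)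
  have hM0 : 0 ≤ M := norm_nonneg y
  have hyM : ∀ ω, |y ω| ≤ M := fun ω => by
    calc |y ω| = ‖y ω‖ := (Real.norm_eq_abs _).symm
      _ ≤ ‖y‖ := norm_le_pi_norm y ω
  set F : ℝ → ℝ := fun t => ∑ ω, if t < |y ω| then w ω else 0 with hFdef
  have hF0 : ∀ t, 0 ≤ F t := fun t =>
    Finset.sum_nonneg fun ω _ => by split <;> [exact hw ω; exact le_rfl]
  have hFmeas : Measurable F := by
    apply Finset.measurable_sum
    intro ω _
    exact Measurable.ite measurableSet_Iio measurable_const measurable_const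
  have goal_eq : lorentz21 w y = ∫ t in Ioi (0 : ℝ), Real.sqrt (F t) := rfl
  rw [goal_eq]
  -- trivial cases
  by_cases htriv : S = 0 ∨ M = 0
  · have hFz : ∀ t ∈ Ioi (0 : ℝ), Real.sqrt (F t) = 0 := by
      intro t ht
      have hFt : F t = 0 := by
        apply Finset.sum_eq_zero
        intro ω _
        rcases htriv with hS | hM
        · have := (Finset.sum_eq_zero_iff_of_nonneg
            (fun ω _ => mul_nonneg (abs_nonneg (y ω)) (hw ω))).1 hS ω (Finset.mem_univ ω)
          split
          · rename_i h
            have hy : 0 < |y ω| := lt_trans ht h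
            have : w ω = 0 := by
              rcases mul_eq_zero.1 this with h' | h'
              · exact absurd h' (ne_of_gt hy)
              · exact h'
            exact this
          · rfl
        · split
          · rename_i h
            have : |y ω| ≤ 0 := hM ▸ hyM ω
            have ht' : (0:ℝ) < t := ht
            linarith
          · rfl
      rw [hFt, Real.sqrt_zero]
    rw [setIntegral_congr_fun measurableSet_Ioi hFz]
    simp
    positivity
  push_neg at htriv
  have hSpos : 0 < S := lt_of_le_of_ne hS0 (Ne.symm htriv.1)
  have hMpos : 0 < M := lt_of_le_of_ne hM0 (Ne.symm htriv.2)
  set c : ℝ := Real.sqrt S / Real.sqrt M with hcdef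
  have hc : 0 < c := div_pos (Real.sqrt_pos.2 hSpos) (Real.sqrt_pos.2 hMpos)
  -- indicator description of summands
  have hind : ∀ ω : Ω, (fun t : ℝ => if t < |y ω| then w ω else 0)
      = (Iio |y ω|).indicator (fun _ => w ω) := by
    intro ω
    funext t
    simp [Set.indicator_apply, Set.mem_Iio]
  -- integrability of summands on Ioc 0 M
  have hIocfin : volume (Ioc (0:ℝ) M) < ⊤ := by
    rw [Real.volume_Ioc]; exact ENNReal.ofReal_lt_top
  have hsummand : ∀ ω : Ω,
      IntegrableOn (fun t : ℝ => if t < |y ω| then w ω else 0) (Ioc 0 M) := by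
    intro ω
    rw [hind ω]
    rw [IntegrableOn, integrable_indicator_iff measurableSet_Iio]
    refine integrableOn_const ?_ (by simp)
    rw [Measure.restrict_apply measurableSet_Iio]
    exact (lt_of_le_of_lt (measure_mono (inter_subset_right)) hIocfin).ne
  have hFint : IntegrableOn F (Ioc 0 M) := by
    rw [hFdef]
    exact integrable_finset_sum _ fun ω _ => hsummand ω
  -- compute the integral of F over Ioc 0 M
  have hFval : ∫ t in Ioc (0:ℝ) M, F t = S := by
    rw [hFdef]
    rw [integral_finset_sum _ fun ω _ => hsummand ω]
    rw [hSdef]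
    apply Finset.sum_congr rfl
    intro ω _
    have : (fun t : ℝ => if t < |y ω| then w ω else 0) = (Iio |y ω|).indicator (fun _ => w ω) :=
      hind ω
    calc ∫ t in Ioc (0:ℝ) M, (if t < |y ω| then w ω else 0)
        = ∫ t in Ioc (0:ℝ) M, (Iio |y ω|).indicator (fun _ => w ω) t := by rw [this]
      _ = ∫ _t in Ioc (0:ℝ) M ∩ Iio |y ω|, w ω := by
          rw [setIntegral_indicator measurableSet_Iio]
      _ = ∫ _t in Ioo (0:ℝ) |y ω|, w ω := by
          have hset : Ioc (0:ℝ) M ∩ Iio |y ω| = Ioo 0 |y ω| := by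
            ext t
            simp only [mem_inter_iff, mem_Ioc, mem_Iio, mem_Ioo]
            constructor
            · rintro ⟨⟨h1, _⟩, h3⟩; exact ⟨h1, h3⟩
            · rintro ⟨h1, h2⟩; exact ⟨⟨h1, le_trans h2.le (hyM ω)⟩, h2⟩
          rw [hset]
      _ = |y ω| * w ω := by
          rw [setIntegral_const, Real.volume_real_Ioo_of_le (abs_nonneg _), smul_eq_mul, sub_zero]
  -- integrability of sqrt ∘ F on Ioc 0 M
  have hsqrtint : IntegrableOn (fun t => Real.sqrt (F t)) (Ioc 0 M) := by
    apply Measure.integrableOn_of_bounded (M := Real.sqrt (∑ ω, w ω)) hIocfin.ne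
      (hFmeas.sqrt.aestronglyMeasurable)
    filter_upwards with t
    rw [Real.norm_eq_abs, abs_of_nonneg (Real.sqrt_nonneg _)]
    apply Real.sqrt_le_sqrt
    apply Finset.sum_le_sum
    intro ω _
    split <;> [exact le_rfl; exact hw ω]
  -- sqrt F vanishes on Ioi M
  have hzero_tail : ∀ t ∈ Ioi M, Real.sqrt (F t) = 0 := by
    intro t ht
    have : F t = 0 := by
      apply Finset.sum_eq_zero
      intro ω _
      have : ¬ t < |y ω| := not_lt.2 (le_trans (hyM ω) (le_of_lt ht))
      simp [this]
    rw [this, Real.sqrt_zero]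
  have htailint : IntegrableOn (fun t => Real.sqrt (F t)) (Ioi M) := by
    apply (integrableOn_congr_fun (fun t ht => (hzero_tail t ht)) measurableSet_Ioi).2
    exact integrableOn_zero
  -- split the integral
  have hsplit : ∫ t in Ioi (0:ℝ), Real.sqrt (F t) = ∫ t in Ioc (0:ℝ) M, Real.sqrt (F t) := by
    rw [← Ioc_union_Ioi_eq_Ioi hMpos.le,
      setIntegral_union Ioc_disjoint_Ioi_same measurableSet_Ioi hsqrtint htailint,
      setIntegral_congr_fun measurableSet_Ioi hzero_tail]
    simp
  rw [hsplit]
  -- pointwise bound and conclusion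
  have hrhsint : IntegrableOn (fun t => F t / (2 * c) + c / 2) (Ioc 0 M) := by
    apply Integrable.add (hFint.div_const _)
    exact integrableOn_const (C := c / 2) hIocfin.ne (by simp)
  have hmono : ∫ t in Ioc (0:ℝ) M, Real.sqrt (F t)
      ≤ ∫ t in Ioc (0:ℝ) M, (F t / (2 * c) + c / 2) := by
    apply setIntegral_mono_on hsqrtint hrhsint measurableSet_Ioc
    intro t _
    exact aux_sqrt_le (hF0 t) hc
  have hcompute : ∫ t in Ioc (0:ℝ) M, (F t / (2 * c) + c / 2)
      = S / (2 * c) + M * (c / 2) := by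
    rw [integral_add (hFint.div_const _) (integrableOn_const (C := c / 2) hIocfin.ne (by simp)),
      integral_div, hFval, setIntegral_const, Real.volume_real_Ioc_of_le hMpos.le, smul_eq_mul, sub_zero]
  have harith : S / (2 * c) + M * (c / 2) = Real.sqrt M * Real.sqrt S := by
    have hs : 0 < Real.sqrt S := Real.sqrt_pos.2 hSpos
    have hm : 0 < Real.sqrt M := Real.sqrt_pos.2 hMpos
    have hS' : Real.sqrt S ^ 2 = S := Real.sq_sqrt hS0
    have hM' : Real.sqrt M ^ 2 = M := Real.sq_sqrt hM0
    rw [hcdef]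
    field_simp
    linear_combination (S - 2*Real.sqrt S^2) * hM' - M * hS'
  linarith [hmono, hcompute ▸ hmono, harith]
end

section
/- There exists a universal constant c₃ > 0 with the following property. Let μ be a finite measure on a finite set Ω such that every point ω ∈ Ω satisfies μ({ω}) ≥ a for some a > 0. Then for every z : Ω → ℝ, ‖z‖_{2,1} ≤ c₃ · (1 + √(log(μ(Ω)/a))) · ‖z‖_2, where ‖z‖_2 = (∑_{ω∈Ω} |z(ω)|² μ({ω}))^{1/2}. -/
set_option maxHeartbeats 1000000


open scoped BigOperators
open MeasureTheory Set

lemma int_piece {T t₀ c k : ℝ} (hc : 0 ≤ c) (hcT : c ≤ T) :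
    ∫ t in Set.Ioo (0:ℝ) T, (t + t₀) * (if t < c then k else 0) = k * (c^2/2 + t₀*c) := by
  have h1 : ∀ t : ℝ, (t + t₀) * (if t < c then k else 0)
      = Set.indicator (Set.Iio c) (fun t => (t + t₀) * k) t := by
    intro t; by_cases h : t < c <;> simp [Set.indicator, h, Set.mem_Iio]
  simp_rw [h1]
  rw [MeasureTheory.setIntegral_indicator measurableSet_Iio]
  have h2 : Set.Ioo (0:ℝ) T ∩ Set.Iio c = Set.Ioo 0 c := by
    ext t
    simp only [Set.mem_inter_iff, Set.mem_Ioo, Set.mem_Iio]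
    exact ⟨fun h => ⟨h.1.1, h.2⟩, fun h => ⟨⟨h.1, h.2.trans_le hcT⟩, h.2⟩⟩
  rw [h2, ← MeasureTheory.integral_Ioc_eq_integral_Ioo,
    ← intervalIntegral.integral_of_le hc,
    intervalIntegral.integral_mul_const,
    intervalIntegral.integral_add intervalIntegral.intervalIntegrable_id
      intervalIntegrable_const,
    integral_id, intervalIntegral.integral_const]
  simp; ring

lemma amgm_aux {lam A B : ℝ} (hlam : 0 < lam) (hA : 0 ≤ A) (hB : 0 ≤ B) :
    Real.sqrt A * Real.sqrt B ≤ (lam * A + lam⁻¹ * B)/2 := by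
  have h1 := Real.sq_sqrt hA
  have h2 := Real.sq_sqrt hB
  have h3 := Real.sq_sqrt hlam.le
  have h4 := Real.sq_sqrt (inv_nonneg.mpr hlam.le)
  have hmul : Real.sqrt lam * Real.sqrt lam⁻¹ = 1 := by
    rw [← Real.sqrt_mul hlam.le, mul_inv_cancel₀ hlam.ne', Real.sqrt_one]
  have h := sq_nonneg (Real.sqrt lam * Real.sqrt A - Real.sqrt lam⁻¹ * Real.sqrt B)
  have expand : (Real.sqrt lam * Real.sqrt A - Real.sqrt lam⁻¹ * Real.sqrt B)^2
      = lam * A + lam⁻¹ * B - 2 * (Real.sqrt lam * Real.sqrt lam⁻¹)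
        * (Real.sqrt A * Real.sqrt B) := by
    have e : (Real.sqrt lam * Real.sqrt A - Real.sqrt lam⁻¹ * Real.sqrt B)^2
        = (Real.sqrt lam^2) * (Real.sqrt A^2) + (Real.sqrt lam⁻¹^2) * (Real.sqrt B^2)
          - 2 * (Real.sqrt lam * Real.sqrt lam⁻¹) * (Real.sqrt A * Real.sqrt B) := by ring
    rw [e, h1, h2, h3, h4]
  rw [expand, hmul] at h
  linarith

theorem stmt4 :
    ∃ c₃ : ℝ, 0 < c₃ ∧
      ∀ (Ω : Type) [Fintype Ω] (w : Ω → ℝ) (a : ℝ), 0 < a → (∀ ω, a ≤ w ω) →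
        ∀ z : Ω → ℝ,
          lorentz21 w z ≤
            c₃ * (1 + Real.sqrt (Real.logb 2 ((∑ ω, w ω) / a))) *
              Real.sqrt (∑ ω, (z ω) ^ 2 * w ω) := by
  classical
  refine ⟨2, by norm_num, ?_⟩
  intro Ω _ w a ha hw z
  set M := ∑ ω, w ω with hMdef
  set S2 := ∑ ω, (z ω)^2 * w ω with hS2def
  have hwpos : ∀ ω, 0 < w ω := fun ω => ha.trans_le (hw ω)
  have hS2nn : 0 ≤ S2 := Finset.sum_nonneg fun ω _ => mul_nonneg (sq_nonneg _) (hwpos ω).le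
  by_cases hz : ∀ ω, z ω = 0
  · have hL : lorentz21 w z = 0 := by
      unfold lorentz21
      rw [MeasureTheory.setIntegral_congr_fun (g := fun _ => (0:ℝ)) measurableSet_Ioi ?_]
      · simp
      · intro t ht
        have h0 : ∀ ω : Ω, ¬ (t < |z ω|) := by
          intro ω; rw [hz ω, abs_zero]; exact not_lt.mpr (le_of_lt ht)
        simp [h0]
    rw [hL]
    positivity
  push_neg at hz
  obtain ⟨ω₀, hω₀⟩ := hz
  have hS2pos : 0 < S2 := Finset.sum_pos'
    (fun ω _ => mul_nonneg (sq_nonneg _) (hwpos ω).le)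
    ⟨ω₀, Finset.mem_univ _, by have := hwpos ω₀; positivity⟩
  set S := Real.sqrt S2 with hSdef
  have hSpos : 0 < S := Real.sqrt_pos.mpr hS2pos
  have hMpos : 0 < M := Finset.sum_pos (fun ω _ => hwpos ω) ⟨ω₀, Finset.mem_univ _⟩
  have haM : a ≤ M := (hw ω₀).trans
    (Finset.single_le_sum (fun ω _ => (hwpos ω).le) (Finset.mem_univ ω₀))
  set T := S / Real.sqrt a with hTdef
  set t₀ := S / Real.sqrt M with ht₀def
  have hTpos : 0 < T := div_pos hSpos (Real.sqrt_pos.mpr ha)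
  have ht₀pos : 0 < t₀ := div_pos hSpos (Real.sqrt_pos.mpr hMpos)
  set F := fun t : ℝ => ∑ ω, if t < |z ω| then w ω else 0 with hFdef
  have hF0 : ∀ t, 0 ≤ F t := fun t => Finset.sum_nonneg fun ω _ => by
    split
    · exact (hwpos ω).le
    · exact le_refl 0
  have hFbd : ∀ t, F t ≤ M := fun t => Finset.sum_le_sum fun ω _ => by
    split
    · exact le_refl _
    · exact (hwpos ω).le
  have hzT : ∀ ω, |z ω| ≤ T := by
    intro ω
    have h1 : (z ω)^2 * a ≤ S2 := by
      refine le_trans ?_ (Finset.single_le_sum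
        (f := fun ω => (z ω)^2 * w ω)
        (fun ω _ => mul_nonneg (sq_nonneg _) (hwpos ω).le) (Finset.mem_univ ω))
      exact mul_le_mul_of_nonneg_left (hw ω) (sq_nonneg _)
    have h2 : |z ω| = Real.sqrt ((z ω)^2) := (Real.sqrt_sq_eq_abs _).symm
    have h3 : T = Real.sqrt (S2 / a) := by
      rw [Real.sqrt_div hS2nn]
    rw [h2, h3]
    apply Real.sqrt_le_sqrt
    rw [le_div_iff₀ ha]
    exact h1
  have hFT : ∀ t, T ≤ t → F t = 0 := by
    intro t ht
    apply Finset.sum_eq_zero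
    intro ω _
    rw [if_neg (not_lt.mpr ((hzT ω).trans ht))]
  have hterm_meas : ∀ ω : Ω, Measurable (fun t : ℝ => if t < |z ω| then w ω else 0) := by
    intro ω
    exact Measurable.ite measurableSet_Iio measurable_const measurable_const
  have hFmeas : Measurable F := Finset.measurable_sum _ fun ω _ => hterm_meas ω
  have hcont : Continuous fun t : ℝ => t + t₀ := continuous_id.add continuous_const
  -- Step 1: reduce to a finite interval
  have step1 : lorentz21 w z = ∫ t in Set.Ioo (0:ℝ) T, Real.sqrt (F t) := by
    have e0 : lorentz21 w z = ∫ t in Set.Ioi (0:ℝ), Real.sqrt (F t) := rfl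
    rw [e0]
    have e1 : Set.EqOn (fun t => Real.sqrt (F t))
        (Set.indicator (Set.Iio T) (fun t => Real.sqrt (F t))) (Set.Ioi (0:ℝ)) := by
      intro t _
      by_cases h : t < T
      · simp [Set.indicator, h]
      · simp [Set.indicator, h, hFT t (not_lt.mp h)]
    rw [MeasureTheory.setIntegral_congr_fun measurableSet_Ioi e1,
      MeasureTheory.setIntegral_indicator measurableSet_Iio, Set.Ioi_inter_Iio]
  -- integrability
  have hint1 : MeasureTheory.IntegrableOn (fun t => (t + t₀) * F t) (Set.Ioo (0:ℝ) T) := by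
    apply MeasureTheory.Measure.integrableOn_of_bounded (M := (T + t₀) * M)
      measure_Ioo_lt_top.ne (hcont.measurable.mul hFmeas).aestronglyMeasurable
    rw [MeasureTheory.ae_restrict_iff' measurableSet_Ioo]
    refine MeasureTheory.ae_of_all _ fun t ht => ?_
    have h1 : (0:ℝ) ≤ t + t₀ := by nlinarith [ht.1]
    show ‖(t + t₀) * F t‖ ≤ _
    rw [Real.norm_eq_abs, abs_of_nonneg (mul_nonneg h1 (hF0 t))]
    apply mul_le_mul (by nlinarith [ht.2]) (hFbd t) (hF0 t) (by nlinarith)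
  have hint2 : MeasureTheory.IntegrableOn (fun t => (t + t₀)⁻¹) (Set.Ioo (0:ℝ) T) := by
    apply MeasureTheory.Measure.integrableOn_of_bounded (M := t₀⁻¹)
      measure_Ioo_lt_top.ne hcont.measurable.inv.aestronglyMeasurable
    rw [MeasureTheory.ae_restrict_iff' measurableSet_Ioo]
    refine MeasureTheory.ae_of_all _ fun t ht => ?_
    have h1 : (0:ℝ) < t + t₀ := by nlinarith [ht.1]
    show ‖(t + t₀)⁻¹‖ ≤ _
    rw [Real.norm_eq_abs, abs_of_nonneg (inv_nonneg.mpr h1.le)]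
    apply inv_anti₀ ht₀pos
    nlinarith [ht.1]
  -- the weighted layer-cake computation
  have hA : ∫ t in Set.Ioo (0:ℝ) T, (t + t₀) * F t
      = ∑ ω, w ω * (|z ω|^2/2 + t₀ * |z ω|) := by
    have e : ∀ t : ℝ, (t + t₀) * F t
        = ∑ ω, (t + t₀) * (if t < |z ω| then w ω else 0) := fun t => by
      rw [hFdef]; exact Finset.mul_sum _ _ _
    simp_rw [e]
    rw [MeasureTheory.integral_finset_sum]
    · exact Finset.sum_congr rfl fun ω _ => int_piece (abs_nonneg _) (hzT ω)
    · intro ω _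
      apply MeasureTheory.Measure.integrableOn_of_bounded (M := (T + t₀) * w ω)
        measure_Ioo_lt_top.ne (hcont.measurable.mul (hterm_meas ω)).aestronglyMeasurable
      rw [MeasureTheory.ae_restrict_iff' measurableSet_Ioo]
      refine MeasureTheory.ae_of_all _ fun t ht => ?_
      have h1 : (0:ℝ) ≤ t + t₀ := by nlinarith [ht.1]
      have h2 : (0:ℝ) ≤ (if t < |z ω| then w ω else 0) := by
        split
        · exact (hwpos ω).le
        · exact le_refl 0
      have h3 : (if t < |z ω| then w ω else 0) ≤ w ω := by
        split
        · exact le_refl _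
        · exact (hwpos ω).le
      show ‖(t + t₀) * (if t < |z ω| then w ω else 0)‖ ≤ _
      rw [Real.norm_eq_abs, abs_of_nonneg (mul_nonneg h1 h2)]
      apply mul_le_mul (by nlinarith [ht.2]) h3 h2 (by nlinarith)
  -- Cauchy-Schwarz for the L¹ part
  have hCS : ∑ ω, w ω * |z ω| ≤ Real.sqrt M * S := by
    have h1 : (∑ ω, w ω * |z ω|)^2 ≤ M * S2 := by
      have h := Finset.sum_mul_sq_le_sq_mul_sq Finset.univ
        (fun ω => Real.sqrt (w ω)) (fun ω => Real.sqrt (w ω) * |z ω|)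
      have e1 : ∀ ω : Ω, Real.sqrt (w ω) * (Real.sqrt (w ω) * |z ω|) = w ω * |z ω| := by
        intro ω
        rw [← mul_assoc, Real.mul_self_sqrt (hwpos ω).le]
      have e2 : ∀ ω : Ω, Real.sqrt (w ω) ^ 2 = w ω := fun ω => Real.sq_sqrt (hwpos ω).le
      have e3 : ∀ ω : Ω, (Real.sqrt (w ω) * |z ω|) ^ 2 = (z ω)^2 * w ω := by
        intro ω
        rw [mul_pow, Real.sq_sqrt (hwpos ω).le, sq_abs]
        ring
      simp_rw [e1, e2, e3] at h
      exact h
    calc ∑ ω, w ω * |z ω| = Real.sqrt ((∑ ω, w ω * |z ω|)^2) :=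
          (Real.sqrt_sq (Finset.sum_nonneg fun ω _ =>
            mul_nonneg (hwpos ω).le (abs_nonneg _))).symm
      _ ≤ Real.sqrt (M * S2) := Real.sqrt_le_sqrt h1
      _ = Real.sqrt M * S := Real.sqrt_mul hMpos.le _
  have hA2 : ∫ t in Set.Ioo (0:ℝ) T, (t + t₀) * F t ≤ (3/2) * S2 := by
    rw [hA]
    have e : ∑ ω, w ω * (|z ω|^2/2 + t₀ * |z ω|)
        = S2/2 + t₀ * ∑ ω, w ω * |z ω| := by
      rw [hS2def, Finset.sum_div, Finset.mul_sum]
      rw [← Finset.sum_add_distrib]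
      apply Finset.sum_congr rfl
      intro ω _
      rw [sq_abs]
      ring
    rw [e]
    have ht₀M : t₀ * (Real.sqrt M * S) = S2 := by
      rw [ht₀def]
      have hsM : Real.sqrt M ≠ 0 := (Real.sqrt_pos.mpr hMpos).ne'
      have hss : S * S = S2 := by rw [hSdef]; exact Real.mul_self_sqrt hS2nn
      field_simp
      linear_combination hss
    nlinarith [mul_le_mul_of_nonneg_left hCS ht₀pos.le]
  have hA0 : 0 ≤ ∫ t in Set.Ioo (0:ℝ) T, (t + t₀) * F t := by
    apply MeasureTheory.setIntegral_nonneg measurableSet_Ioo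
    intro t ht
    exact mul_nonneg (by nlinarith [ht.1]) (hF0 t)
  -- the logarithmic integral
  set L := Real.log ((T + t₀)/t₀) with hLdef
  have hL : ∫ t in Set.Ioo (0:ℝ) T, (t + t₀)⁻¹ = L := by
    rw [← MeasureTheory.integral_Ioc_eq_integral_Ioo,
      ← intervalIntegral.integral_of_le hTpos.le,
      intervalIntegral.integral_comp_add_right (fun x => x⁻¹) t₀,
      zero_add, integral_inv_of_pos ht₀pos (by linarith), hLdef]
  have hLpos : 0 < L := by
    apply Real.log_pos
    rw [lt_div_iff₀ ht₀pos]
    linarith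
  -- AM-GM with parameter lam
  set lam := Real.sqrt (L / ((3/2) * S2)) with hlamdef
  have hlampos : 0 < lam := Real.sqrt_pos.mpr (by positivity)
  clear_value M S2 S T t₀ F L lam
  have key : lorentz21 w z ≤ (lam * ((3/2)*S2) + lam⁻¹ * L)/2 := by
    rw [step1]
    have mono : ∫ t in Set.Ioo (0:ℝ) T, Real.sqrt (F t)
        ≤ ∫ t in Set.Ioo (0:ℝ) T, (lam * ((t+t₀) * F t) + lam⁻¹ * (t+t₀)⁻¹)/2 := by
      apply MeasureTheory.integral_mono_of_nonneg
      · exact MeasureTheory.ae_of_all _ fun t => Real.sqrt_nonneg _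
      · exact ((hint1.const_mul lam).add (hint2.const_mul lam⁻¹)).div_const 2
      · show ∀ᵐ t ∂(MeasureTheory.volume.restrict (Set.Ioo (0:ℝ) T)),
          Real.sqrt (F t) ≤ (lam * ((t+t₀) * F t) + lam⁻¹ * (t+t₀)⁻¹)/2
        rw [MeasureTheory.ae_restrict_iff' measurableSet_Ioo]
        refine MeasureTheory.ae_of_all _ fun t ht => ?_
        have htt : (0:ℝ) < t + t₀ := by nlinarith [ht.1]
        have hFt := hF0 t
        have e : Real.sqrt (F t)
            = Real.sqrt ((t+t₀) * F t) * Real.sqrt ((t+t₀)⁻¹) := by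
          rw [← Real.sqrt_mul (mul_nonneg htt.le hFt)]
          congr 1
          field_simp
        show Real.sqrt (F t) ≤ (lam * ((t+t₀) * F t) + lam⁻¹ * (t+t₀)⁻¹)/2
        rw [e]
        exact amgm_aux hlampos (mul_nonneg htt.le hFt) (inv_nonneg.mpr htt.le)
    have e2 : ∫ t in Set.Ioo (0:ℝ) T, (lam * ((t+t₀) * F t) + lam⁻¹ * (t+t₀)⁻¹)/2
        = (lam * (∫ t in Set.Ioo (0:ℝ) T, (t+t₀) * F t) + lam⁻¹ * L)/2 := by
      rw [MeasureTheory.integral_div,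
        MeasureTheory.integral_add (hint1.const_mul lam) (hint2.const_mul lam⁻¹),
        MeasureTheory.integral_const_mul, MeasureTheory.integral_const_mul, hL]
    rw [e2] at mono
    refine mono.trans ?_
    have := mul_le_mul_of_nonneg_left hA2 hlampos.le
    linarith
  have hlameq : (lam * ((3/2)*S2) + lam⁻¹ * L)/2 = Real.sqrt ((3/2) * S2 * L) := by
    have hCpos : (0:ℝ) < (3/2) * S2 := by positivity
    have e1 : lam * ((3/2)*S2) = Real.sqrt ((3/2) * S2 * L) := by
      rw [hlamdef, ← Real.sqrt_sq hCpos.le, ← Real.sqrt_mul (by positivity)]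
      congr 1
      field_simp
      ring_nf
      rw [Real.sq_sqrt (by positivity)]
      ring
    have e2 : lam⁻¹ * L = Real.sqrt ((3/2) * S2 * L) := by
      rw [hlamdef, ← Real.sqrt_inv, inv_div, ← Real.sqrt_sq hLpos.le,
        ← Real.sqrt_mul (by positivity)]
      congr 1
      field_simp
      ring_nf
      rw [Real.sq_sqrt (by positivity)]
    rw [e1, e2]
    ring
  -- final elementary estimates
  have hMa1 : (1:ℝ) ≤ M / a := (one_le_div ha).mpr haM
  set y := Real.logb 2 (M/a) with hy
  have hy0 : 0 ≤ y := Real.logb_nonneg one_lt_two hMa1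
  have hsy : (1:ℝ) ≤ Real.sqrt (M/a) := by
    rw [show (1:ℝ) = Real.sqrt 1 from Real.sqrt_one.symm]
    exact Real.sqrt_le_sqrt hMa1
  have hTt0 : (T + t₀)/t₀ = 1 + Real.sqrt (M/a) := by
    have hsa : Real.sqrt a ≠ 0 := (Real.sqrt_pos.mpr ha).ne'
    have hsM : Real.sqrt M ≠ 0 := (Real.sqrt_pos.mpr hMpos).ne'
    have e : Real.sqrt (M/a) = Real.sqrt M / Real.sqrt a := Real.sqrt_div hMpos.le a
    rw [add_div, div_self ht₀pos.ne', hTdef, ht₀def, e]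
    rw [div_div_div_eq]
    rw [mul_comm S (Real.sqrt M), mul_div_mul_right _ _ hSpos.ne']
    ring
  have hLy : L ≤ 1 + y := by
    have h1 : L = Real.log (1 + Real.sqrt (M/a)) := by rw [hLdef, hTt0]
    have h2 : Real.log (1 + Real.sqrt (M/a)) ≤ Real.log (2 * Real.sqrt (M/a)) := by
      apply Real.log_le_log (by linarith)
      linarith
    have h3 : Real.log (2 * Real.sqrt (M/a)) = Real.log 2 + Real.log (M/a) / 2 := by
      rw [Real.log_mul (by norm_num) (by linarith), Real.log_sqrt (by positivity)]
    have h4 : Real.log (M/a) = Real.log 2 * y := by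
      rw [hy, Real.logb]
      field_simp
    have h5 : Real.log 2 ≤ 1 := by
      have := Real.log_le_sub_one_of_pos (by norm_num : (0:ℝ) < 2)
      linarith
    have h6 : 0 ≤ Real.log 2 := Real.log_nonneg (by norm_num)
    have h7 : 0 ≤ Real.log (M/a) := Real.log_nonneg hMa1
    rw [h1]
    calc Real.log (1 + Real.sqrt (M/a)) ≤ Real.log 2 + Real.log (M/a) / 2 := by
          rw [← h3]; exact h2
      _ ≤ 1 + y := by nlinarith
  have hfin : Real.sqrt ((3/2) * S2 * L) ≤ 2 * (1 + Real.sqrt y) * S := by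
    have hsyy := Real.sq_sqrt hy0
    have hsynn := Real.sqrt_nonneg y
    have h1 : (3/2) * S2 * L ≤ (2 * (1 + Real.sqrt y))^2 * S2 := by
      calc (3/2) * S2 * L ≤ (3/2) * S2 * (1 + y) :=
            mul_le_mul_of_nonneg_left hLy (by positivity)
        _ ≤ (2 * (1 + Real.sqrt y))^2 * S2 := by
            nlinarith [mul_nonneg hS2nn hsynn,
              mul_nonneg (mul_nonneg hS2nn hsynn) hsynn]
    calc Real.sqrt ((3/2) * S2 * L) ≤ Real.sqrt ((2 * (1 + Real.sqrt y))^2 * S2) :=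
          Real.sqrt_le_sqrt h1
      _ = 2 * (1 + Real.sqrt y) * S := by
          rw [Real.sqrt_mul (sq_nonneg _), Real.sqrt_sq (by positivity), ← hSdef]
  calc lorentz21 w z ≤ (lam * ((3/2)*S2) + lam⁻¹ * L)/2 := key
    _ = Real.sqrt ((3/2) * S2 * L) := hlameq
    _ ≤ 2 * (1 + Real.sqrt y) * S := hfin
end

section
/- Let μ be a probability measure on a finite set Ω. Then for all functions y_1,…,y_S : Ω → ℝ, (∑_{s=1}^S ‖y_s‖_{2,1}²)^{1/2} ≤ max_{ω∈Ω} ∑_{s=1}^S |y_s(ω)|. -/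
open scoped BigOperators

open MeasureTheory Set

lemma intg_term (c k : ℝ) :
    IntegrableOn (fun t : ℝ => if t < c then k else 0) (Ioi 0) := by
  have h : (fun t : ℝ => if t < c then k else 0) = (Iio c).indicator (fun _ => k) := by
    ext t; simp [Set.indicator_apply, Set.mem_Iio]
  rw [h, IntegrableOn, integrable_indicator_iff measurableSet_Iio, IntegrableOn,
    Measure.restrict_restrict measurableSet_Iio]
  refine (integrableOn_const_iff).mpr (Or.inr ?_)
  calc volume (Iio c ∩ Ioi 0) ≤ volume (Iio c ∩ Ioi 0 ∪ Ioo 0 c) := measure_mono subset_union_left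
  _ = volume (Ioo 0 c) := by
      congr 1
      rw [inter_comm, Ioi_inter_Iio]
      exact union_self _
  _ < ⊤ := measure_Ioo_lt_top

lemma integral_term (c k : ℝ) (hc : 0 ≤ c) :
    ∫ t in Ioi (0:ℝ), (if t < c then k else 0) = k * c := by
  have h : (fun t : ℝ => if t < c then k else 0) = (Iio c).indicator (fun _ => k) := by
    ext t; simp [Set.indicator_apply, Set.mem_Iio]
  rw [h, integral_indicator measurableSet_Iio,
    Measure.restrict_restrict measurableSet_Iio, inter_comm, Ioi_inter_Iio,
    setIntegral_const, measureReal_def, Real.volume_Ioo, smul_eq_mul]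
  rw [ENNReal.toReal_ofReal (by linarith)]
  ring

lemma intg_term' (c k : ℝ) :
    IntegrableOn (fun t : ℝ => if t ≤ c then k else 0) (Ioi 0) := by
  have h : (fun t : ℝ => if t ≤ c then k else 0) = (Iic c).indicator (fun _ => k) := by
    ext t; simp [Set.indicator_apply, Set.mem_Iic]
  rw [h, IntegrableOn, integrable_indicator_iff measurableSet_Iic, IntegrableOn,
    Measure.restrict_restrict measurableSet_Iic]
  refine (integrableOn_const_iff).mpr (Or.inr ?_)
  calc volume (Iic c ∩ Ioi 0) = volume (Ioc 0 c) := by rw [inter_comm, Ioi_inter_Iic]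
  _ < ⊤ := measure_Ioc_lt_top

lemma integral_term' (c k : ℝ) (hc : 0 ≤ c) :
    ∫ t in Ioi (0:ℝ), (if t ≤ c then k else 0) = k * c := by
  have h : (fun t : ℝ => if t ≤ c then k else 0) = (Iic c).indicator (fun _ => k) := by
    ext t; simp [Set.indicator_apply, Set.mem_Iic]
  rw [h, integral_indicator measurableSet_Iic,
    Measure.restrict_restrict measurableSet_Iic, inter_comm, Ioi_inter_Iic,
    setIntegral_const, measureReal_def, Real.volume_Ioc, smul_eq_mul]
  rw [ENNReal.toReal_ofReal (by linarith)]
  ring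

lemma key {Ω : Type*} [Fintype Ω] (w : Ω → ℝ) (hw : ∀ ω, 0 ≤ w ω)
    (f : Ω → ℝ) (M : ℝ) (hM : ∀ ω, |f ω| ≤ M) (hM0 : 0 ≤ M) :
    (lorentz21 w f) ^ 2 ≤ M * ∑ ω, w ω * |f ω| := by
  set F : ℝ → ℝ := fun t => ∑ ω, if t < |f ω| then w ω else 0 with hFdef
  set L : ℝ := ∑ ω, w ω * |f ω| with hLdef
  have hL0 : 0 ≤ L := Finset.sum_nonneg fun ω _ => mul_nonneg (hw ω) (abs_nonneg _)
  have hF0 : ∀ t, 0 ≤ F t := fun t =>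
    Finset.sum_nonneg fun ω _ => by split_ifs; exacts [hw ω, le_refl 0]
  have hFM : ∀ t, M ≤ t → F t = 0 := by
    intro t ht
    refine Finset.sum_eq_zero fun ω _ => ?_
    rw [if_neg (not_lt.mpr (le_trans (hM ω) ht))]
  have hFint : IntegrableOn F (Ioi 0) :=
    integrable_finset_sum _ fun ω _ => intg_term _ _
  have hFI : ∫ t in Ioi (0:ℝ), F t = L := by
    rw [hFdef, integral_finset_sum _ fun ω _ => intg_term _ _]
    exact Finset.sum_congr rfl fun ω _ => integral_term _ _ (abs_nonneg _)
  have hFmeas : Measurable F := by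
    refine Finset.measurable_sum _ fun ω _ => ?_
    exact Measurable.ite measurableSet_Iio measurable_const measurable_const
  have hΛeq : lorentz21 w f = ∫ t in Ioi (0:ℝ), Real.sqrt (F t) := rfl
  have hΛ0 : 0 ≤ lorentz21 w f := by
    rw [hΛeq]
    exact setIntegral_nonneg measurableSet_Ioi fun t _ => Real.sqrt_nonneg _
  -- main bound: for every x > 0, Λ ≤ L/(2x) + x*M/2
  have hbound : ∀ x : ℝ, 0 < x → lorentz21 w f ≤ L / (2*x) + x * M / 2 := by
    intro x hx
    set G : ℝ → ℝ := fun t => F t / (2*x) + (if t ≤ M then x/2 else 0) with hGdef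
    have hGint : IntegrableOn G (Ioi 0) :=
      (hFint.div_const (2*x)).add (intg_term' M (x/2))
    have hpt : ∀ t ∈ Ioi (0:ℝ), Real.sqrt (F t) ≤ G t := by
      intro t _
      by_cases ht : t ≤ M
      · simp only [hGdef, if_pos ht]
        have hgoal : Real.sqrt (F t) ≤ (F t + x^2)/(2*x) := by
          rw [le_div_iff₀ (by positivity)]
          nlinarith [sq_nonneg (Real.sqrt (F t) - x), Real.sq_sqrt (hF0 t)]
        calc Real.sqrt (F t) ≤ (F t + x^2)/(2*x) := hgoal
        _ = F t/(2*x) + x/2 := by field_simp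
      · have hz : F t = 0 := hFM t (le_of_lt (not_le.mp ht))
        simp only [hGdef, if_neg ht, hz, Real.sqrt_zero, zero_div, add_zero, le_refl]
    have hG0 : ∀ t, 0 ≤ G t := by
      intro t
      have : (0:ℝ) ≤ if t ≤ M then x/2 else 0 := by split_ifs <;> positivity
      have := hF0 t
      positivity
    have hsqrtInt : IntegrableOn (fun t => Real.sqrt (F t)) (Ioi 0) := by
      refine Integrable.mono hGint (hFmeas.sqrt.aestronglyMeasurable) ?_
      refine (ae_restrict_iff' measurableSet_Ioi).mpr (Filter.Eventually.of_forall ?_)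
      intro t ht
      rw [Real.norm_eq_abs, Real.norm_eq_abs, abs_of_nonneg (Real.sqrt_nonneg _),
        abs_of_nonneg (hG0 t)]
      exact hpt t ht
    have hmono : lorentz21 w f ≤ ∫ t in Ioi (0:ℝ), G t := by
      rw [hΛeq]
      refine integral_mono_ae hsqrtInt hGint ?_
      exact (ae_restrict_iff' measurableSet_Ioi).mpr (Filter.Eventually.of_forall hpt)
    have hGI : ∫ t in Ioi (0:ℝ), G t = L / (2*x) + x * M / 2 := by
      rw [hGdef, integral_add (hFint.div_const (2*x)) (intg_term' M (x/2)),
        integral_div, hFI, integral_term' M (x/2) hM0]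
      ring
    linarith [hmono, hGI.le, hGI.ge]
  -- conclude
  rcases eq_or_lt_of_le hL0 with hL | hL
  · -- L = 0 : Λ ≤ ε for all ε > 0
    have hΛle : lorentz21 w f ≤ 0 := by
      refine le_of_forall_pos_le_add fun ε hε => ?_
      have hx : (0:ℝ) < 2*ε/(M+1) := by positivity
      have := hbound _ hx
      rw [← hL] at this
      have hMM : (2*ε/(M+1)) * M / 2 ≤ ε := by
        rw [div_mul_eq_mul_div, div_div, div_le_iff₀ (by positivity)]
        nlinarith
      simp only [zero_div, zero_add] at this
      linarith
    have : lorentz21 w f = 0 := le_antisymm hΛle hΛ0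
    rw [this, ← hL]
    simp
  · -- L > 0, hence M > 0
    have hMpos : 0 < M := by
      rcases eq_or_lt_of_le hM0 with h | h
      · exfalso
        have : L = 0 := by
          refine Finset.sum_eq_zero fun ω _ => ?_
          have h1 : |f ω| ≤ 0 := by rw [h]; exact hM ω
          have h2 : |f ω| = 0 := le_antisymm h1 (abs_nonneg _)
          rw [h2, mul_zero]
        linarith
      · exact h
    set x : ℝ := Real.sqrt (L / M) with hxdef
    have hxpos : 0 < x := Real.sqrt_pos.mpr (div_pos hL hMpos)
    have hx2 : x^2 = L / M := Real.sq_sqrt (le_of_lt (div_pos hL hMpos))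
    have hxL : x^2 * M = L := by
      rw [hx2]; field_simp
    have hb := hbound x hxpos
    have hhalf : L / (2*x) = x * M / 2 := by
      rw [← hxL]; field_simp
    have hΛle : lorentz21 w f ≤ x * M := by
      rw [hhalf] at hb; linarith
    calc (lorentz21 w f)^2 ≤ (x*M)^2 := by nlinarith
    _ = x^2 * M * M := by ring
    _ = M * L := by rw [hxL]; ring

theorem stmt6 (Ω : Type) [Fintype Ω] (w : Ω → ℝ) (hw : ∀ ω, 0 ≤ w ω)
    (hw1 : (∑ ω, w ω) = 1) (S : ℕ) (y : Fin S → Ω → ℝ) :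
    Real.sqrt (∑ s, (lorentz21 w (y s)) ^ 2) ≤ ‖(fun ω => ∑ s, |y s ω|)‖ := by
  set M : ℝ := ‖(fun ω => ∑ s, |y s ω|)‖ with hMdef
  have hM0 : 0 ≤ M := norm_nonneg _
  have hMω : ∀ ω, ∑ s, |y s ω| ≤ M := by
    intro ω
    have h1 : ‖(fun ω => ∑ s, |y s ω|) ω‖ ≤ M := norm_le_pi_norm (fun ω => ∑ s, |y s ω|) ω
    rw [Real.norm_eq_abs] at h1
    exact le_trans (le_abs_self _) h1
  have hsum : ∑ s, (lorentz21 w (y s)) ^ 2 ≤ M * M := by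
    calc ∑ s, (lorentz21 w (y s)) ^ 2
        ≤ ∑ s, M * (∑ ω, w ω * |y s ω|) := by
          refine Finset.sum_le_sum fun s _ => ?_
          refine key w hw (y s) M (fun ω => ?_) hM0
          exact le_trans (Finset.single_le_sum (f := fun s' => |y s' ω|)
            (fun s' _ => abs_nonneg _) (Finset.mem_univ s)) (hMω ω)
    _ = M * (∑ ω, w ω * (∑ s, |y s ω|)) := by
          rw [← Finset.mul_sum, Finset.sum_comm]
          congr 1
          exact Finset.sum_congr rfl fun ω _ => by rw [Finset.mul_sum]
    _ ≤ M * (∑ ω, w ω * M) := by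
          refine mul_le_mul_of_nonneg_left ?_ hM0
          exact Finset.sum_le_sum fun ω _ => mul_le_mul_of_nonneg_left (hMω ω) (hw ω)
    _ = M * M := by rw [← Finset.sum_mul, hw1, one_mul]
  calc Real.sqrt (∑ s, (lorentz21 w (y s)) ^ 2) ≤ Real.sqrt (M * M) :=
        Real.sqrt_le_sqrt hsum
  _ = M := Real.sqrt_mul_self hM0
end

section
/- There exists a universal constant c₄ > 0 with the following property. Let N ≥ 2 be an integer and let μ be a probability measure on a finite set Ω with at most N points. Then for all functions z_1,…,z_S : Ω → ℝ, (∑_{s=1}^S ‖z_s‖_{2,1}²)^{1/2} ≤ c₄ · √(log N) · max_{ω∈Ω} (∑_{s=1}^S |z_s(ω)|²)^{1/2}. -/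
open scoped BigOperators
open MeasureTheory Finset Set
set_option linter.unusedSectionVars false

namespace Stmt7Aux

variable {Ω : Type} [Fintype Ω] [Nonempty Ω]

noncomputable def Fd (w f : Ω → ℝ) : ℝ → ℝ := fun t => ∑ ω, if t < |f ω| then w ω else 0

noncomputable def Mf (f : Ω → ℝ) : ℝ := Finset.univ.sup' Finset.univ_nonempty (fun ω => |f ω|)

noncomputable def cc (w f : Ω → ℝ) (j : ℕ) : ℝ :=
  sSup {t | t ≤ 0 ∨ ((2:ℝ)^j)⁻¹ < Fd w f t}

variable (w f : Ω → ℝ)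

lemma Fd_antitone (hw : ∀ ω, 0 ≤ w ω) : Antitone (Fd w f) := by
  intro a b hab
  refine Finset.sum_le_sum fun ω _ => ?_
  split_ifs with h1 h2
  · exact le_rfl
  · exact (h2 (lt_of_le_of_lt hab h1)).elim
  · exact hw ω
  · exact le_rfl

lemma abs_le_Mf (ω : Ω) : |f ω| ≤ Mf f :=
  Finset.le_sup' (fun ω => |f ω|) (Finset.mem_univ ω)

lemma Mf_nonneg : 0 ≤ Mf f := by
  obtain ⟨ω⟩ := (inferInstance : Nonempty Ω)
  exact le_trans (abs_nonneg (f ω)) (abs_le_Mf f ω)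

lemma Fd_nonneg (hw : ∀ ω, 0 ≤ w ω) (t : ℝ) : 0 ≤ Fd w f t :=
  Finset.sum_nonneg fun ω _ => by split_ifs; exacts [hw ω, le_rfl]

lemma Fd_le_one (hw : ∀ ω, 0 ≤ w ω) (hw1 : (∑ ω, w ω) = 1) (t : ℝ) : Fd w f t ≤ 1 := by
  rw [← hw1]
  exact Finset.sum_le_sum fun ω _ => by split_ifs; exacts [le_rfl, hw ω]

lemma Fd_eq_zero {t : ℝ} (ht : Mf f ≤ t) : Fd w f t = 0 := by
  refine Finset.sum_eq_zero fun ω _ => ?_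
  rw [if_neg (not_lt.2 ((abs_le_Mf f ω).trans ht))]

lemma S_nonempty (j : ℕ) : {t | t ≤ 0 ∨ ((2:ℝ)^j)⁻¹ < Fd w f t}.Nonempty :=
  ⟨0, Or.inl le_rfl⟩

lemma S_bddAbove (j : ℕ) : BddAbove {t | t ≤ 0 ∨ ((2:ℝ)^j)⁻¹ < Fd w f t} := by
  refine ⟨Mf f, fun t ht => ?_⟩
  rcases ht with ht | ht
  · exact ht.trans (Mf_nonneg f)
  · by_contra h
    rw [Fd_eq_zero w f (le_of_not_ge h)] at ht
    have h2 : (0:ℝ) < ((2:ℝ)^j)⁻¹ := by positivity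
    linarith

lemma cc_nonneg (j : ℕ) : 0 ≤ cc w f j :=
  le_csSup (S_bddAbove w f j) (Or.inl le_rfl)

lemma cc_le_Mf (j : ℕ) : cc w f j ≤ Mf f := by
  refine csSup_le (S_nonempty w f j) fun t ht => ?_
  rcases ht with ht | ht
  · exact ht.trans (Mf_nonneg f)
  · by_contra h
    rw [Fd_eq_zero w f (le_of_not_ge h)] at ht
    have h2 : (0:ℝ) < ((2:ℝ)^j)⁻¹ := by positivity
    linarith

lemma cc_mono : Monotone (cc w f) := by
  intro j k hjk
  refine csSup_le_csSup (S_bddAbove w f k) (S_nonempty w f j) fun t ht => ?_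
  rcases ht with ht | ht
  · exact Or.inl ht
  · refine Or.inr (lt_of_le_of_lt ?_ ht)
    have h1 : ((2:ℝ)^j) ≤ (2:ℝ)^k := pow_le_pow_right₀ (by norm_num) hjk
    exact inv_anti₀ (by positivity) h1

lemma cc_zero (hw : ∀ ω, 0 ≤ w ω) (hw1 : (∑ ω, w ω) = 1) : cc w f 0 = 0 := by
  have hS : {t | t ≤ 0 ∨ ((2:ℝ)^(0:ℕ))⁻¹ < Fd w f t} = Set.Iic 0 := by
    ext t
    simp only [pow_zero, inv_one, Set.mem_setOf_eq, Set.mem_Iic]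
    constructor
    · rintro (h | h)
      · exact h
      · exact absurd h (not_lt.2 (Fd_le_one w f hw hw1 t))
    · exact Or.inl
  rw [cc, hS, csSup_Iic]

lemma Fd_le_of_cc_lt {j : ℕ} {t : ℝ} (h : cc w f j < t) : Fd w f t ≤ ((2:ℝ)^j)⁻¹ := by
  by_contra hc
  exact absurd (le_csSup (S_bddAbove w f j) (Or.inr (lt_of_not_ge hc))) h.not_ge

lemma cheb_measure (hw : ∀ ω, 0 ≤ w ω) {j : ℕ} (hj : 0 < cc w f j) :
    ((2:ℝ)^j)⁻¹ ≤ ∑ ω, if cc w f j ≤ |f ω| then w ω else 0 := by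
  set c := cc w f j with hc
  set tstar := Finset.univ.sup' Finset.univ_nonempty
    (fun ω => if |f ω| < c then |f ω| else 0) with htstar
  have htlt : tstar < c := by
    rw [htstar, Finset.sup'_lt_iff]
    intro ω _
    split_ifs with h
    · exact h
    · exact hj
  obtain ⟨t, ht, htt⟩ := exists_lt_of_lt_csSup (S_nonempty w f j) htlt
  have ht0 : 0 < t := by
    obtain ⟨ω⟩ := (inferInstance : Nonempty Ω)
    have h0 : (0:ℝ) ≤ tstar := by
      refine le_trans ?_ (Finset.le_sup'
        (fun ω => if |f ω| < c then |f ω| else 0) (Finset.mem_univ ω))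
      split_ifs
      · exact abs_nonneg _
      · exact le_rfl
    linarith
  have hF : ((2:ℝ)^j)⁻¹ < Fd w f t := by
    rcases ht with h | h
    · exact absurd h ht0.not_ge
    · exact h
  refine hF.le.trans ?_
  refine Finset.sum_le_sum fun ω _ => ?_
  by_cases h : t < |f ω|
  · rw [if_pos h, if_pos]
    by_contra h'
    have hle : |f ω| ≤ tstar := by
      refine le_trans (le_of_eq ?_) (Finset.le_sup'
        (fun ω => if |f ω| < c then |f ω| else 0) (Finset.mem_univ ω))
      rw [if_pos (lt_of_not_ge h')]
    linarith
  · rw [if_neg h]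
    split_ifs
    · exact hw ω
    · exact le_rfl

lemma telescope_le (c : ℕ → ℝ) (hc0 : c 0 = 0) (hmono : Monotone c) {a : ℝ} (ha : 0 ≤ a)
    (J : ℕ) :
    (∑ j ∈ Finset.range J, if c (j+1) ≤ a then c (j+1)^2 - c j ^2 else 0) ≤ a^2 := by
  induction J with
  | zero => simpa using sq_nonneg a
  | succ J ih =>
    rw [Finset.sum_range_succ]
    by_cases h : c (J+1) ≤ a
    · have hcongr : ∀ j ∈ Finset.range (J+1),
          (if c (j+1) ≤ a then c (j+1)^2 - c j ^2 else 0) = c (j+1)^2 - c j ^2 := by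
        intro j hj
        simp only [Finset.mem_range] at hj
        exact if_pos ((hmono (by omega : j + 1 ≤ J + 1)).trans h)
      rw [← Finset.sum_range_succ]
      rw [Finset.sum_congr rfl hcongr]
      rw [Finset.sum_range_sub (fun j => c j ^ 2), hc0]
      have hnn : 0 ≤ c (J+1) := hc0 ▸ hmono (Nat.zero_le _)
      simpa using pow_le_pow_left₀ hnn h 2
    · rw [if_neg h, add_zero]; exact ih


lemma cheb_sum (hw : ∀ ω, 0 ≤ w ω) (hw1 : (∑ ω, w ω) = 1) (J : ℕ) :
    ∑ j ∈ Finset.range J, ((2:ℝ)^(j+1))⁻¹ * (cc w f (j+1)^2 - cc w f j^2)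
      ≤ ∑ ω, w ω * f ω^2 := by
  have hΔ : ∀ j:ℕ, 0 ≤ cc w f (j+1)^2 - cc w f j^2 := fun j => by
    have := pow_le_pow_left₀ (cc_nonneg w f j) (cc_mono w f (Nat.le_succ j)) 2
    linarith
  calc ∑ j ∈ Finset.range J, ((2:ℝ)^(j+1))⁻¹ * (cc w f (j+1)^2 - cc w f j^2)
      ≤ ∑ j ∈ Finset.range J,
          (∑ ω, if cc w f (j+1) ≤ |f ω| then w ω else 0) * (cc w f (j+1)^2 - cc w f j^2) := by
        refine Finset.sum_le_sum fun j _ => ?_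
        rcases lt_or_ge 0 (cc w f (j+1)) with h | h
        · exact mul_le_mul_of_nonneg_right (cheb_measure w f hw h) (hΔ j)
        · have h1 : cc w f (j+1) = 0 := le_antisymm h (cc_nonneg w f (j+1))
          have h2 : cc w f j = 0 :=
            le_antisymm (h1 ▸ cc_mono w f (Nat.le_succ j)) (cc_nonneg w f j)
          rw [h1, h2]; simp
    _ = ∑ ω, w ω * ∑ j ∈ Finset.range J,
          (if cc w f (j+1) ≤ |f ω| then cc w f (j+1)^2 - cc w f j^2 else 0) := by
        simp_rw [Finset.sum_mul, Finset.mul_sum]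
        rw [Finset.sum_comm]
        refine Finset.sum_congr rfl fun ω _ => Finset.sum_congr rfl fun j _ => ?_
        split_ifs <;> ring
    _ ≤ ∑ ω, w ω * f ω^2 := by
        refine Finset.sum_le_sum fun ω _ => ?_
        have h := telescope_le (cc w f) (cc_zero w f hw hw1) (cc_mono w f) (abs_nonneg (f ω)) J
        rw [sq_abs] at h
        exact mul_le_mul_of_nonneg_left h (hw ω)

noncomputable def ee (w f : Ω → ℝ) (J j : ℕ) : ℝ := if j ≤ J then cc w f j else Mf f

lemma ee_step (J j : ℕ) : ee w f J j ≤ ee w f J (j+1) := by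
  unfold ee
  split_ifs with h1 h2 h2
  · exact cc_mono w f (Nat.le_succ j)
  · exact cc_le_Mf w f j
  · omega
  · exact le_rfl

lemma ee_nonneg (J j : ℕ) : 0 ≤ ee w f J j := by
  unfold ee; split_ifs
  · exact cc_nonneg w f j
  · exact Mf_nonneg f

lemma stepA (hw : ∀ ω, 0 ≤ w ω) (hw1 : (∑ ω, w ω) = 1) (J : ℕ) :
    lorentz21 w f ≤ ∑ j ∈ Finset.range (J+1),
      Real.sqrt ((2:ℝ)^j)⁻¹ * (ee w f J (j+1) - ee w f J j) := by
  classical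
  set g : ℝ → ℝ := fun t => ∑ j ∈ Finset.range (J+1),
    Set.indicator (Set.Ioc (ee w f J j) (ee w f J (j+1)))
      (fun _ => Real.sqrt ((2:ℝ)^j)⁻¹) t with hg
  have hgint : IntegrableOn g (Set.Ioi (0:ℝ)) := by
    refine (integrable_finset_sum _ fun j _ => ?_).restrict
    exact (integrable_indicator_iff measurableSet_Ioc).2
      (integrableOn_const measure_Ioc_lt_top.ne)
  have hFmeas : Measurable fun t => Real.sqrt (Fd w f t) :=
    Real.continuous_sqrt.measurable.comp (Fd_antitone w f hw).measurable
  have hgnn : ∀ t, 0 ≤ g t := fun t =>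
    Finset.sum_nonneg fun j _ =>
      Set.indicator_nonneg (fun _ _ => Real.sqrt_nonneg _) t
  have hle : ∀ t ∈ Set.Ioi (0:ℝ), Real.sqrt (Fd w f t) ≤ g t := by
    intro t ht
    rw [Set.mem_Ioi] at ht
    by_cases hM : t ≤ Mf f
    · have hPex : t ≤ ee w f J (J+1) := by
        unfold ee; rw [if_neg (by omega)]; exact hM
      have hfind : ∃ k, t ≤ ee w f J k := ⟨J+1, hPex⟩
      set k := Nat.find hfind with hk
      have hks : t ≤ ee w f J k := Nat.find_spec hfind
      have hkJ : k ≤ J + 1 := Nat.find_min' hfind hPex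
      have hk0 : k ≠ 0 := by
        intro h0
        rw [h0] at hks
        have : ee w f J 0 = 0 := by
          unfold ee; rw [if_pos (Nat.zero_le _)]; exact cc_zero w f hw hw1
        rw [this] at hks; linarith
      obtain ⟨j, hj⟩ : ∃ j, k = j + 1 := ⟨k - 1, by omega⟩
      have hjJ : j ≤ J := by omega
      have htj : ee w f J j < t :=
        lt_of_not_ge (Nat.find_min hfind (by omega))
      have hFt : Real.sqrt (Fd w f t) ≤ Real.sqrt ((2:ℝ)^j)⁻¹ := by
        apply Real.sqrt_le_sqrt
        apply Fd_le_of_cc_lt w f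
        have : ee w f J j = cc w f j := by unfold ee; rw [if_pos hjJ]
        rwa [this] at htj
      have hmem : t ∈ Set.Ioc (ee w f J j) (ee w f J (j+1)) := ⟨htj, hj ▸ hks⟩
      have hterm : Set.indicator (Set.Ioc (ee w f J j) (ee w f J (j+1)))
          (fun _ => Real.sqrt ((2:ℝ)^j)⁻¹) t = Real.sqrt ((2:ℝ)^j)⁻¹ :=
        Set.indicator_of_mem hmem _
      calc Real.sqrt (Fd w f t) ≤ Real.sqrt ((2:ℝ)^j)⁻¹ := hFt
        _ = Set.indicator (Set.Ioc (ee w f J j) (ee w f J (j+1)))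
            (fun _ => Real.sqrt ((2:ℝ)^j)⁻¹) t := hterm.symm
        _ ≤ g t := Finset.single_le_sum
            (f := fun i => Set.indicator (Set.Ioc (ee w f J i) (ee w f J (i+1)))
              (fun _ => Real.sqrt ((2:ℝ)^i)⁻¹) t)
            (fun i _ => Set.indicator_nonneg (fun _ _ => Real.sqrt_nonneg _) t)
            (Finset.mem_range.2 (by omega : j < J + 1))
    · rw [Fd_eq_zero w f (le_of_not_ge hM), Real.sqrt_zero]
      exact hgnn t
  have hFint : IntegrableOn (fun t => Real.sqrt (Fd w f t)) (Set.Ioi (0:ℝ)) := by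
    refine hgint.mono' hFmeas.aestronglyMeasurable ?_
    refine (ae_restrict_iff' measurableSet_Ioi).2 (ae_of_all _ fun t ht => ?_)
    rw [Real.norm_eq_abs, abs_of_nonneg (Real.sqrt_nonneg _)]
    exact hle t ht
  have h1 : lorentz21 w f ≤ ∫ t in Set.Ioi (0:ℝ), g t := by
    refine setIntegral_mono_on hFint hgint measurableSet_Ioi hle
  refine h1.trans (le_of_eq ?_)
  rw [hg, integral_finset_sum]
  · refine Finset.sum_congr rfl fun j _ => ?_
    rw [setIntegral_indicator measurableSet_Ioc]
    have hsub : Set.Ioi (0:ℝ) ∩ Set.Ioc (ee w f J j) (ee w f J (j+1))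
        = Set.Ioc (ee w f J j) (ee w f J (j+1)) := by
      refine Set.inter_eq_right.2 fun x hx => ?_
      exact lt_of_le_of_lt (ee_nonneg w f J j) hx.1
    rw [hsub, setIntegral_const, Real.volume_real_Ioc_of_le (ee_step w f J j), smul_eq_mul,
      mul_comm]
  · intro j _
    exact ((integrable_indicator_iff measurableSet_Ioc).2
      (integrableOn_const measure_Ioc_lt_top.ne)).restrict

lemma lorentz21_nonneg : 0 ≤ lorentz21 w f :=
  setIntegral_nonneg measurableSet_Ioi fun _ _ => Real.sqrt_nonneg _

end Stmt7Aux

section Mink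

lemma cs_sum {ι : Type*} (T : Finset ι) (a b : ι → ℝ) :
    ∑ i ∈ T, a i * b i ≤ Real.sqrt (∑ i ∈ T, a i ^2) * Real.sqrt (∑ i ∈ T, b i ^2) := by
  have h := Finset.sum_mul_sq_le_sq_mul_sq T a b
  have h2 : ∑ i ∈ T, a i * b i ≤ |∑ i ∈ T, a i * b i| := le_abs_self _
  rw [← Real.sqrt_sq_eq_abs] at h2
  refine h2.trans ?_
  rw [← Real.sqrt_mul (Finset.sum_nonneg fun i _ => sq_nonneg _)]
  exact Real.sqrt_le_sqrt h

lemma mink2 {S : ℕ} (a b : Fin S → ℝ) :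
    Real.sqrt (∑ s, (a s + b s)^2)
      ≤ Real.sqrt (∑ s, a s ^2) + Real.sqrt (∑ s, b s ^2) := by
  set A := Real.sqrt (∑ s, a s ^2) with hA
  set B := Real.sqrt (∑ s, b s ^2) with hB
  have hA0 : 0 ≤ A := Real.sqrt_nonneg _
  have hB0 : 0 ≤ B := Real.sqrt_nonneg _
  have hA2 : A^2 = ∑ s, a s ^2 := Real.sq_sqrt (Finset.sum_nonneg fun i _ => sq_nonneg _)
  have hB2 : B^2 = ∑ s, b s ^2 := Real.sq_sqrt (Finset.sum_nonneg fun i _ => sq_nonneg _)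
  have hab : ∑ s, a s * b s ≤ A * B := cs_sum _ a b
  have hexp : ∑ s, (a s + b s)^2 ≤ (A + B)^2 := by
    have hkey : ∑ s, (a s + b s)^2 = (∑ s, a s ^2) + 2 * (∑ s, a s * b s) + ∑ s, b s ^2 := by
      simp_rw [add_sq]
      rw [Finset.sum_add_distrib, Finset.sum_add_distrib, Finset.mul_sum]
      simp_rw [mul_assoc]
    rw [hkey]
    nlinarith
  calc Real.sqrt (∑ s, (a s + b s)^2) ≤ Real.sqrt ((A+B)^2) := Real.sqrt_le_sqrt hexp
    _ = A + B := Real.sqrt_sq (by linarith)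

lemma minkowski_sum {ι : Type*} {S : ℕ} (T : Finset ι) (v : ι → Fin S → ℝ) :
    Real.sqrt (∑ s, (∑ j ∈ T, v j s)^2) ≤ ∑ j ∈ T, Real.sqrt (∑ s, v j s ^2) := by
  classical
  induction T using Finset.induction_on with
  | empty => simp
  | insert _ _ hj ih =>
    rename_i j T
    rw [Finset.sum_insert hj]
    simp_rw [Finset.sum_insert hj]
    exact (mink2 (v j) _).trans (by linarith [ih])

lemma sqrt_sum_mono {S : ℕ} {a b : Fin S → ℝ} (h0 : ∀ s, 0 ≤ a s) (h : ∀ s, a s ≤ b s) :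
    Real.sqrt (∑ s, a s ^2) ≤ Real.sqrt (∑ s, b s ^2) :=
  Real.sqrt_le_sqrt (Finset.sum_le_sum fun s _ => pow_le_pow_left₀ (h0 s) (h s) 2)

end Mink

open Stmt7Aux

theorem stmt7 :
    ∃ c₄ : ℝ, 0 < c₄ ∧
      ∀ (N : ℕ), 2 ≤ N →
        ∀ (Ω : Type) [Fintype Ω], Fintype.card Ω ≤ N →
          ∀ (w : Ω → ℝ), (∀ ω, 0 ≤ w ω) → (∑ ω, w ω) = 1 →
            ∀ (S : ℕ) (z : Fin S → Ω → ℝ),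
              Real.sqrt (∑ s, (lorentz21 w (z s)) ^ 2) ≤
                c₄ * Real.sqrt (Real.logb 2 N) *
                  ‖(fun ω => Real.sqrt (∑ s, (z s ω) ^ 2))‖ := by
  refine ⟨3, by norm_num, ?_⟩
  intro N hN Ω _ hcard w hw hw1 S z
  haveI : Nonempty Ω := by
    rcases isEmpty_or_nonempty Ω with h | h
    · rw [Finset.univ_eq_empty, Finset.sum_empty] at hw1; norm_num at hw1
    · exact h
  set J := Nat.log 2 N + 1 with hJ
  set M := ‖(fun ω => Real.sqrt (∑ s, (z s ω) ^ 2))‖ with hM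
  have hM0 : 0 ≤ M := norm_nonneg _
  have hMω : ∀ ω, ∑ s, (z s ω)^2 ≤ M^2 := by
    intro ω
    have h1 : Real.sqrt (∑ s, (z s ω)^2) ≤ M := by
      have h2 := norm_le_pi_norm (fun ω => Real.sqrt (∑ s, (z s ω) ^ 2)) ω
      rwa [Real.norm_eq_abs, abs_of_nonneg (Real.sqrt_nonneg _)] at h2
    calc ∑ s, (z s ω)^2 = (Real.sqrt (∑ s, (z s ω)^2))^2 :=
          (Real.sq_sqrt (Finset.sum_nonneg fun s _ => sq_nonneg _)).symm
      _ ≤ M^2 := pow_le_pow_left₀ (Real.sqrt_nonneg _) h1 2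
  set v : ℕ → Fin S → ℝ := fun j s =>
    Real.sqrt ((2:ℝ)^j)⁻¹ * (ee w (z s) J (j+1) - ee w (z s) J j) with hv
  have hv0 : ∀ j s, 0 ≤ v j s := fun j s =>
    mul_nonneg (Real.sqrt_nonneg _) (sub_nonneg.2 (ee_step w (z s) J j))
  have hstep : ∀ s, lorentz21 w (z s) ≤ ∑ j ∈ Finset.range (J+1), v j s :=
    fun s => stepA w (z s) hw hw1 J
  -- bound the total square sum
  have hT : ∑ j ∈ Finset.range (J+1), ∑ s, v j s ^2 ≤ 3 * M^2 := by
    rw [Finset.sum_comm]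
    have hs : ∀ s, ∑ j ∈ Finset.range (J+1), v j s ^2
        ≤ 2 * (∑ ω, w ω * (z s ω)^2) + ((2:ℝ)^J)⁻¹ * (Mf (z s))^2 := by
      intro s
      rw [Finset.sum_range_succ]
      have hhead : ∑ j ∈ Finset.range J, v j s ^2 ≤ 2 * ∑ ω, w ω * (z s ω)^2 := by
        have h1 : ∀ j ∈ Finset.range J, v j s ^2
            ≤ 2 * (((2:ℝ)^(j+1))⁻¹ * (cc w (z s) (j+1)^2 - cc w (z s) j^2)) := by
          intro j hj
          rw [Finset.mem_range] at hj
          have e1 : ee w (z s) J j = cc w (z s) j := by unfold ee; rw [if_pos (by omega)]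
          have e2 : ee w (z s) J (j+1) = cc w (z s) (j+1) := by unfold ee; rw [if_pos (by omega)]
          have hsq : v j s ^2 = ((2:ℝ)^j)⁻¹ * (cc w (z s) (j+1) - cc w (z s) j)^2 := by
            rw [hv, mul_pow, Real.sq_sqrt (by positivity), e1, e2]
          rw [hsq]
          have hc1 : 0 ≤ cc w (z s) j := cc_nonneg w (z s) j
          have hc2 : cc w (z s) j ≤ cc w (z s) (j+1) := cc_mono w (z s) (Nat.le_succ j)
          have hdiff : (cc w (z s) (j+1) - cc w (z s) j)^2
              ≤ cc w (z s) (j+1)^2 - cc w (z s) j^2 := by nlinarith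
          have hp : ((2:ℝ)^(j+1))⁻¹ = 2⁻¹ * ((2:ℝ)^j)⁻¹ := by
            rw [pow_succ, mul_inv, mul_comm]
          have h2j : (0:ℝ) < ((2:ℝ)^j)⁻¹ := by positivity
          rw [hp]
          nlinarith
        calc ∑ j ∈ Finset.range J, v j s ^2
            ≤ ∑ j ∈ Finset.range J,
                2 * (((2:ℝ)^(j+1))⁻¹ * (cc w (z s) (j+1)^2 - cc w (z s) j^2)) :=
              Finset.sum_le_sum h1
          _ = 2 * ∑ j ∈ Finset.range J,
                ((2:ℝ)^(j+1))⁻¹ * (cc w (z s) (j+1)^2 - cc w (z s) j^2) :=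
              (Finset.mul_sum _ _ _).symm
          _ ≤ 2 * ∑ ω, w ω * (z s ω)^2 := by
              have h2 := cheb_sum w (z s) hw hw1 J
              linarith
      have htail : v J s ^2 ≤ ((2:ℝ)^J)⁻¹ * (Mf (z s))^2 := by
        have e1 : ee w (z s) J J = cc w (z s) J := by unfold ee; rw [if_pos le_rfl]
        have e2 : ee w (z s) J (J+1) = Mf (z s) := by unfold ee; rw [if_neg (by omega)]
        have hsq : v J s ^2 = ((2:ℝ)^J)⁻¹ * (Mf (z s) - cc w (z s) J)^2 := by
          rw [hv, mul_pow, Real.sq_sqrt (by positivity), e1, e2]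
        rw [hsq]
        have hc1 : 0 ≤ cc w (z s) J := cc_nonneg w (z s) J
        have hc2 : cc w (z s) J ≤ Mf (z s) := cc_le_Mf w (z s) J
        have h2J : (0:ℝ) < ((2:ℝ)^J)⁻¹ := by positivity
        have hd : (Mf (z s) - cc w (z s) J)^2 ≤ (Mf (z s))^2 := by nlinarith
        exact mul_le_mul_of_nonneg_left hd h2J.le
      linarith
    have hA : ∑ s, ∑ ω, w ω * (z s ω)^2 ≤ M^2 := by
      rw [Finset.sum_comm]
      calc ∑ ω, ∑ s, w ω * (z s ω)^2 = ∑ ω, w ω * ∑ s, (z s ω)^2 := by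
            refine Finset.sum_congr rfl fun ω _ => (Finset.mul_sum _ _ _).symm
        _ ≤ ∑ ω, w ω * M^2 :=
            Finset.sum_le_sum fun ω _ => mul_le_mul_of_nonneg_left (hMω ω) (hw ω)
        _ = M^2 := by rw [← Finset.sum_mul, hw1, one_mul]
    have hB : ∑ s, (Mf (z s))^2 ≤ (N:ℝ) * M^2 := by
      have hpers : ∀ s, (Mf (z s))^2 ≤ ∑ ω, (z s ω)^2 := by
        intro s
        obtain ⟨ω0, _, hω0⟩ := Finset.exists_mem_eq_sup' Finset.univ_nonempty
          (fun ω => |z s ω|)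
        have : (Mf (z s))^2 = (z s ω0)^2 := by rw [Mf, hω0, sq_abs]
        rw [this]
        exact Finset.single_le_sum (fun ω _ => sq_nonneg (z s ω)) (Finset.mem_univ ω0)
      calc ∑ s, (Mf (z s))^2 ≤ ∑ s, ∑ ω, (z s ω)^2 := Finset.sum_le_sum fun s _ => hpers s
        _ = ∑ ω, ∑ s, (z s ω)^2 := Finset.sum_comm
        _ ≤ ∑ _ω : Ω, M^2 := Finset.sum_le_sum fun ω _ => hMω ω
        _ = (Fintype.card Ω : ℝ) * M^2 := by
            rw [Finset.sum_const, Finset.card_univ, nsmul_eq_mul]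
        _ ≤ (N:ℝ) * M^2 := by
            have : (Fintype.card Ω : ℝ) ≤ (N:ℝ) := by exact_mod_cast hcard
            nlinarith
    have hC : ((2:ℝ)^J)⁻¹ * ((N:ℝ) * M^2) ≤ M^2 := by
      have hNlt : (N:ℝ) ≤ (2:ℝ)^J := by
        have := Nat.lt_pow_succ_log_self (b := 2) (by norm_num) N
        exact_mod_cast this.le
      have h2J : (0:ℝ) < (2:ℝ)^J := by positivity
      have h1 : ((2:ℝ)^J)⁻¹ * ((N:ℝ) * M^2) = ((N:ℝ)/(2:ℝ)^J) * M^2 := by ring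
      rw [h1]
      have h2 : (N:ℝ)/(2:ℝ)^J ≤ 1 := by rw [div_le_one h2J]; exact hNlt
      nlinarith [sq_nonneg M]
    calc ∑ s, ∑ j ∈ Finset.range (J+1), v j s ^2
        ≤ ∑ s, (2 * (∑ ω, w ω * (z s ω)^2) + ((2:ℝ)^J)⁻¹ * (Mf (z s))^2) :=
          Finset.sum_le_sum fun s _ => hs s
      _ = 2 * (∑ s, ∑ ω, w ω * (z s ω)^2) + ((2:ℝ)^J)⁻¹ * ∑ s, (Mf (z s))^2 := by
          rw [Finset.sum_add_distrib, ← Finset.mul_sum, ← Finset.mul_sum]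
      _ ≤ 2 * M^2 + ((2:ℝ)^J)⁻¹ * ((N:ℝ) * M^2) := by
          have h2J : (0:ℝ) ≤ ((2:ℝ)^J)⁻¹ := by positivity
          have := mul_le_mul_of_nonneg_left hB h2J
          linarith
      _ ≤ 3 * M^2 := by linarith
  -- main chain
  have main : Real.sqrt (∑ s, (lorentz21 w (z s))^2)
      ≤ Real.sqrt ((J:ℝ)+1) * Real.sqrt (3 * M^2) := by
    calc Real.sqrt (∑ s, (lorentz21 w (z s))^2)
        ≤ Real.sqrt (∑ s, (∑ j ∈ Finset.range (J+1), v j s)^2) :=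
          sqrt_sum_mono (fun s => lorentz21_nonneg w (z s)) hstep
      _ ≤ ∑ j ∈ Finset.range (J+1), Real.sqrt (∑ s, v j s ^2) := minkowski_sum _ _
      _ ≤ Real.sqrt ((J:ℝ)+1) * Real.sqrt (∑ j ∈ Finset.range (J+1), ∑ s, v j s ^2) := by
          have h := cs_sum (Finset.range (J+1)) (fun _ => (1:ℝ))
            (fun j => Real.sqrt (∑ s, v j s ^2))
          have e1 : ∑ j ∈ Finset.range (J+1), (1:ℝ) * Real.sqrt (∑ s, v j s ^2)
              = ∑ j ∈ Finset.range (J+1), Real.sqrt (∑ s, v j s ^2) := by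
            simp
          have e2 : ∑ _j ∈ Finset.range (J+1), (1:ℝ)^2 = ((J:ℝ)+1) := by
            rw [Finset.sum_const, Finset.card_range, nsmul_eq_mul, one_pow, mul_one]
            push_cast; ring
          have e3 : ∑ j ∈ Finset.range (J+1), (Real.sqrt (∑ s, v j s ^2))^2
              = ∑ j ∈ Finset.range (J+1), ∑ s, v j s ^2 :=
            Finset.sum_congr rfl fun j _ =>
              Real.sq_sqrt (Finset.sum_nonneg fun s _ => sq_nonneg _)
          rw [e1, e2, e3] at h
          exact h
      _ ≤ Real.sqrt ((J:ℝ)+1) * Real.sqrt (3 * M^2) :=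
          mul_le_mul_of_nonneg_left (Real.sqrt_le_sqrt hT) (Real.sqrt_nonneg _)
  -- numeric conclusion
  have hlogpos : 0 < Nat.log 2 N := Nat.log_pos (by norm_num) hN
  have hlogb : ((Nat.log 2 N : ℝ)) ≤ Real.logb 2 N := by
    have h2 : ((2:ℝ))^(Nat.log 2 N) ≤ (N:ℝ) := by
      exact_mod_cast Nat.pow_log_le_self 2 (by omega)
    rw [Real.logb, le_div_iff₀ (Real.log_pos (by norm_num))]
    calc (Nat.log 2 N : ℝ) * Real.log 2 = Real.log ((2:ℝ)^(Nat.log 2 N)) := by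
          rw [Real.log_pow]
      _ ≤ Real.log N := Real.log_le_log (by positivity) h2
  have hlogb0 : 0 ≤ Real.logb 2 N := le_trans (by positivity) hlogb
  have hJle : ((J:ℝ)+1) ≤ 3 * Real.logb 2 N := by
    have h1 : ((J:ℝ)+1) ≤ 3 * (Nat.log 2 N : ℝ) := by
      rw [hJ]
      push_cast
      have : (1:ℝ) ≤ (Nat.log 2 N : ℝ) := by exact_mod_cast hlogpos
      linarith
    linarith
  have hsqJ : Real.sqrt ((J:ℝ)+1) ≤ Real.sqrt 3 * Real.sqrt (Real.logb 2 N) := by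
    rw [← Real.sqrt_mul (by norm_num)]
    exact Real.sqrt_le_sqrt hJle
  calc Real.sqrt (∑ s, (lorentz21 w (z s))^2)
      ≤ Real.sqrt ((J:ℝ)+1) * Real.sqrt (3 * M^2) := main
    _ = Real.sqrt ((J:ℝ)+1) * (Real.sqrt 3 * M) := by
        rw [Real.sqrt_mul (by norm_num), Real.sqrt_sq hM0]
    _ ≤ (Real.sqrt 3 * Real.sqrt (Real.logb 2 N)) * (Real.sqrt 3 * M) :=
        mul_le_mul_of_nonneg_right hsqJ (by positivity)
    _ = (Real.sqrt 3 * Real.sqrt 3) * (Real.sqrt (Real.logb 2 N) * M) := by ring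
    _ = 3 * Real.sqrt (Real.logb 2 N) * M := by
        rw [Real.mul_self_sqrt (by norm_num)]; ring
end

section
/- There exists a universal constant c > 0 with the following property. For every integer N ≥ 2 there exist a real Banach space Y and a nonzero bounded linear operator T : l_∞^N → Y such that π_2(T) ≥ c^{-1} · √(log N) · π_{2,1}(T), where π_2(T) is the least constant C for which T is 2-summing with constant C and π_{2,1}(T) is the least constant C for which T is (2,1)-summing with constant C. -/
open scoped BigOperators

/-- `T` is (2,1)-summing with constant `C`. -/
def Summing21 {X Y : Type*} [NormedAddCommGroup X] [NormedSpace ℝ X]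
    [NormedAddCommGroup Y] [NormedSpace ℝ Y] (T : X →L[ℝ] Y) (C : ℝ) : Prop :=
  ∀ (S : ℕ) (x : Fin S → X),
    Real.sqrt (∑ s, ‖T (x s)‖ ^ 2) ≤
      C * sSup {r : ℝ | ∃ f : X →L[ℝ] ℝ, ‖f‖ ≤ 1 ∧ r = ∑ s, |f (x s)|}

/-- `T` is 2-summing with constant `C`. -/
def Summing2 {X Y : Type*} [NormedAddCommGroup X] [NormedSpace ℝ X]
    [NormedAddCommGroup Y] [NormedSpace ℝ Y] (T : X →L[ℝ] Y) (C : ℝ) : Prop :=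
  ∀ (S : ℕ) (x : Fin S → X),
    Real.sqrt (∑ s, ‖T (x s)‖ ^ 2) ≤
      C * sSup {r : ℝ | ∃ f : X →L[ℝ] ℝ, ‖f‖ ≤ 1 ∧
        r = Real.sqrt (∑ s, |f (x s)| ^ 2)}



open Finset

namespace Stmt19Aux

noncomputable def w (k : ℕ) : ℝ := Real.sqrt (k + 1) - Real.sqrt k

lemma w_nonneg (k : ℕ) : 0 ≤ w k := by
  have : Real.sqrt k ≤ Real.sqrt (k + 1) := Real.sqrt_le_sqrt (by push_cast; linarith)
  simp [w]; linarith

lemma w_eq (k : ℕ) : w k = 1 / (Real.sqrt (k + 1) + Real.sqrt k) := by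
  have h1 : Real.sqrt ((k : ℝ) + 1) ^ 2 = (k : ℝ) + 1 := Real.sq_sqrt (by positivity)
  have h2 : Real.sqrt (k : ℝ) ^ 2 = (k : ℝ) := Real.sq_sqrt (by positivity)
  have hp : 0 < Real.sqrt ((k : ℝ) + 1) := Real.sqrt_pos.2 (by positivity)
  have hn : 0 ≤ Real.sqrt (k : ℝ) := Real.sqrt_nonneg _
  rw [w, eq_div_iff (by positivity)]
  nlinarith

lemma w_zero : w 0 = 1 := by simp [w]

lemma w_antitone {k m : ℕ} (h : k ≤ m) : w m ≤ w k := by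
  rw [w_eq, w_eq]
  have h1 : Real.sqrt ((k : ℝ) + 1) ≤ Real.sqrt ((m : ℝ) + 1) :=
    Real.sqrt_le_sqrt (by push_cast; exact_mod_cast by exact_mod_cast Nat.succ_le_succ h)
  have h2 : Real.sqrt (k : ℝ) ≤ Real.sqrt (m : ℝ) := Real.sqrt_le_sqrt (Nat.cast_le.2 h)
  have hp : 0 < Real.sqrt ((k : ℝ) + 1) + Real.sqrt k := by
    have : 0 < Real.sqrt ((k : ℝ) + 1) := Real.sqrt_pos.2 (by positivity)
    have := Real.sqrt_nonneg (k : ℝ); linarith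
  exact one_div_le_one_div_of_le hp (by linarith)

lemma w_le {K : ℕ} (hK : 1 ≤ K) : w K ≤ 1 / (2 * Real.sqrt K) := by
  rw [w_eq]
  have hp : 0 < Real.sqrt (K : ℝ) := Real.sqrt_pos.2 (by exact_mod_cast hK)
  have h1 : Real.sqrt (K : ℝ) ≤ Real.sqrt ((K : ℝ) + 1) := Real.sqrt_le_sqrt (by linarith)
  exact one_div_le_one_div_of_le (by linarith) (by linarith)

lemma w_ge (k : ℕ) : 1 / (2 * Real.sqrt ((k : ℝ) + 1)) ≤ w k := by
  rw [w_eq]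
  have hp : 0 < Real.sqrt ((k : ℝ) + 1) := Real.sqrt_pos.2 (by positivity)
  have h1 : Real.sqrt (k : ℝ) ≤ Real.sqrt ((k : ℝ) + 1) := Real.sqrt_le_sqrt (by linarith)
  exact one_div_le_one_div_of_le (by positivity) (by linarith)

lemma sum_w (K : ℕ) : ∑ j ∈ Finset.range K, w j = Real.sqrt K := by
  have h := Finset.sum_range_sub (fun i : ℕ => Real.sqrt i) K
  have : ∀ j ∈ Finset.range K, w j = Real.sqrt ((j+1 : ℕ) : ℝ) - Real.sqrt (j : ℝ) := by
    intro j _; simp [w]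
  rw [Finset.sum_congr rfl this, h]
  simp

end Stmt19Aux

section Part2
namespace Stmt19Aux

variable (N : ℕ)

noncomputable def Gf (x : Fin N → ℝ) : ℝ :=
  Finset.univ.sup' ⟨1, Finset.mem_univ 1⟩
    (fun π : Equiv.Perm (Fin N) => ∑ k, w k.val * |x (π k)|)

variable {N}

lemma phi_nonneg (x : Fin N → ℝ) (π : Equiv.Perm (Fin N)) :
    0 ≤ ∑ k, w k.val * |x (π k)| :=
  Finset.sum_nonneg fun k _ => mul_nonneg (w_nonneg _) (abs_nonneg _)

lemma le_Gf (x : Fin N → ℝ) (π : Equiv.Perm (Fin N)) :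
    ∑ k, w k.val * |x (π k)| ≤ Gf N x :=
  Finset.le_sup' (fun π : Equiv.Perm (Fin N) => ∑ k, w k.val * |x (π k)|) (Finset.mem_univ π)

lemma Gf_le (x : Fin N → ℝ) {a : ℝ}
    (h : ∀ π : Equiv.Perm (Fin N), ∑ k, w k.val * |x (π k)| ≤ a) : Gf N x ≤ a :=
  Finset.sup'_le _ _ fun π _ => h π

lemma Gf_nonneg (x : Fin N → ℝ) : 0 ≤ Gf N x :=
  le_trans (phi_nonneg x 1) (le_Gf x 1)

lemma abs_le_Gf [NeZero N] (x : Fin N → ℝ) (j : Fin N) : |x j| ≤ Gf N x := by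
  refine le_trans ?_ (le_Gf x (Equiv.swap 0 j))
  have h0 : w (0 : Fin N).val * |x (Equiv.swap 0 j 0)| = |x j| := by
    simp [w_zero, Equiv.swap_apply_left]
  calc |x j| = w (0 : Fin N).val * |x (Equiv.swap 0 j 0)| := h0.symm
    _ ≤ ∑ k, w k.val * |x (Equiv.swap 0 j k)| :=
        Finset.single_le_sum (f := fun k : Fin N => w k.val * |x (Equiv.swap 0 j k)|)
          (fun k _ => mul_nonneg (w_nonneg _) (abs_nonneg _)) (Finset.mem_univ 0)

lemma Gf_add (x y : Fin N → ℝ) : Gf N (x + y) ≤ Gf N x + Gf N y := by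
  refine Gf_le _ fun π => ?_
  calc ∑ k, w k.val * |(x + y) (π k)|
      ≤ ∑ k, (w k.val * |x (π k)| + w k.val * |y (π k)|) := by
        refine Finset.sum_le_sum fun k _ => ?_
        rw [← mul_add]
        exact mul_le_mul_of_nonneg_left (abs_add_le _ _) (w_nonneg _)
    _ = (∑ k, w k.val * |x (π k)|) + ∑ k, w k.val * |y (π k)| := Finset.sum_add_distrib
    _ ≤ Gf N x + Gf N y := add_le_add (le_Gf x π) (le_Gf y π)

lemma Gf_neg (x : Fin N → ℝ) : Gf N (-x) = Gf N x := by
  unfold Gf; congr 1; funext π; simp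

lemma Gf_smul_le (a : ℝ) (x : Fin N → ℝ) : Gf N (a • x) ≤ |a| * Gf N x := by
  refine Gf_le _ fun π => ?_
  calc ∑ k, w k.val * |(a • x) (π k)|
      = |a| * ∑ k, w k.val * |x (π k)| := by
        rw [Finset.mul_sum]
        refine Finset.sum_congr rfl fun k _ => ?_
        simp [abs_mul]; ring
    _ ≤ |a| * Gf N x := mul_le_mul_of_nonneg_left (le_Gf x π) (abs_nonneg a)

end Stmt19Aux
end Part2

namespace Stmt19Aux

lemma Gf_le_pinorm {N : ℕ} (x : Fin N → ℝ) : Gf N x ≤ Real.sqrt N * ‖x‖ := by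
  refine Gf_le _ fun π => ?_
  calc ∑ k, w k.val * |x (π k)|
      ≤ ∑ k : Fin N, w k.val * ‖x‖ := by
        refine Finset.sum_le_sum fun k _ => ?_
        refine mul_le_mul_of_nonneg_left ?_ (w_nonneg _)
        simpa [Real.norm_eq_abs] using norm_le_pi_norm x (π k)
    _ = (∑ k : Fin N, w k.val) * ‖x‖ := by rw [Finset.sum_mul]
    _ = Real.sqrt N * ‖x‖ := by
        congr 1
        rw [Fin.sum_univ_eq_sum_range (fun j => w j), sum_w]

def LY (N : ℕ) : Type := Fin N → ℝ

noncomputable instance (N : ℕ) : AddCommGroup (LY N) := inferInstanceAs (AddCommGroup (Fin N → ℝ))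
noncomputable instance (N : ℕ) : Module ℝ (LY N) := inferInstanceAs (Module ℝ (Fin N → ℝ))

noncomputable instance LYnormed (N : ℕ) [NeZero N] : NormedAddCommGroup (LY N) :=
  AddGroupNorm.toNormedAddCommGroup
  { toFun := fun x => Gf N x
    map_zero' := by
      refine le_antisymm (Gf_le _ fun π => le_of_eq ?_) (Gf_nonneg _)
      refine Finset.sum_eq_zero fun k _ => ?_
      have : (0 : LY N) (π k) = 0 := rfl
      rw [this]; simp
    add_le' := fun x y => Gf_add x y
    neg' := fun x => Gf_neg x
    eq_zero_of_map_eq_zero' := by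
      intro x hx
      have hx' : Gf N x = 0 := hx
      funext j
      have h1 := abs_le_Gf (N := N) x j
      rw [hx'] at h1
      have := abs_nonneg (x j)
      have : |x j| = 0 := le_antisymm h1 this
      exact abs_eq_zero.mp this }

lemma LY_norm_eq {N : ℕ} [NeZero N] (x : LY N) : ‖x‖ = Gf N x := rfl

noncomputable instance (N : ℕ) [NeZero N] : NormedSpace ℝ (LY N) :=
  ⟨fun a x => by
    rw [LY_norm_eq, Real.norm_eq_abs, LY_norm_eq]
    exact Gf_smul_le a x⟩

instance (N : ℕ) : FiniteDimensional ℝ (LY N) :=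
  inferInstanceAs (FiniteDimensional ℝ (Fin N → ℝ))

instance (N : ℕ) [NeZero N] : CompleteSpace (LY N) := FiniteDimensional.complete ℝ _

noncomputable def Tmap (N : ℕ) [NeZero N] : (Fin N → ℝ) →L[ℝ] LY N :=
  LinearMap.mkContinuous
    { toFun := fun x => (x : LY N)
      map_add' := fun _ _ => rfl
      map_smul' := fun _ _ => rfl }
    (Real.sqrt N)
    (fun x => Gf_le_pinorm x)

lemma Tmap_norm {N : ℕ} [NeZero N] (x : Fin N → ℝ) : ‖Tmap N x‖ = Gf N x := rfl

end Stmt19Aux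

namespace Stmt19Aux

lemma sqrt_two_le : Real.sqrt 2 ≤ 1.5 := by
  nlinarith [Real.sq_sqrt (by norm_num : (0:ℝ) ≤ 2), Real.sqrt_nonneg 2]

lemma Gf_le_sqrt {N : ℕ} (x : Fin N → ℝ) {B : ℝ} (hB : ∀ k, |x k| ≤ B) :
    Gf N x ≤ 2 * Real.sqrt (B * ∑ k, |x k|) := by
  classical
  set L := ∑ k, |x k| with hLdef
  have hL0 : 0 ≤ L := Finset.sum_nonneg fun k _ => abs_nonneg _
  have hxL : ∀ k, |x k| ≤ L := fun k =>
    Finset.single_le_sum (f := fun k => |x k|) (fun k _ => abs_nonneg _) (Finset.mem_univ k)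
  set B' := min B L with hB'def
  have hB' : ∀ k, |x k| ≤ B' := fun k => le_min (hB k) (hxL k)
  by_cases hB'0 : B' ≤ 0
  · have hgf : Gf N x ≤ 0 := by
      refine Gf_le _ fun π => le_of_eq (Finset.sum_eq_zero fun k _ => ?_)
      have h1 : |x (π k)| = 0 := le_antisymm (le_trans (hB' _) hB'0) (abs_nonneg _)
      rw [h1, mul_zero]
    have : (0:ℝ) ≤ 2 * Real.sqrt (B * L) := by positivity
    linarith
  push_neg at hB'0
  have hBL : B' ≤ L := min_le_right _ _
  have hLpos : 0 < L := lt_of_lt_of_le hB'0 hBL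
  set K := ⌈L / B'⌉₊ with hKdef
  have hdivpos : 0 < L / B' := div_pos hLpos hB'0
  have hdiv1 : 1 ≤ L / B' := (one_le_div hB'0).2 hBL
  have hK1 : 1 ≤ K := Nat.one_le_ceil_iff.2 hdivpos
  have hKge : L / B' ≤ (K : ℝ) := Nat.le_ceil _
  have hKle : (K : ℝ) ≤ 2 * (L / B') := by
    have := (Nat.ceil_lt_add_one (le_of_lt hdivpos)).le
    linarith
  have hKpos : (0:ℝ) < (K : ℝ) := by exact_mod_cast hK1
  have hsK : 0 < Real.sqrt K := Real.sqrt_pos.2 hKpos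
  -- main per-permutation bound
  have main : ∀ π : Equiv.Perm (Fin N),
      ∑ k, w k.val * |x (π k)| ≤ B' * Real.sqrt K + L / (2 * Real.sqrt K) := by
    intro π
    rw [← Finset.sum_filter_add_sum_filter_not Finset.univ (fun k : Fin N => k.val < K)]
    have hS1 : ∑ k ∈ Finset.univ.filter (fun k : Fin N => k.val < K), w k.val * |x (π k)|
        ≤ B' * Real.sqrt K := by
      have h1 : ∑ k ∈ Finset.univ.filter (fun k : Fin N => k.val < K), w k.val * |x (π k)|
          ≤ ∑ k ∈ Finset.univ.filter (fun k : Fin N => k.val < K), w k.val * B' :=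
        Finset.sum_le_sum fun k _ => mul_le_mul_of_nonneg_left (hB' _) (w_nonneg _)
      have h2 : ∑ k ∈ Finset.univ.filter (fun k : Fin N => k.val < K), w k.val
          ≤ Real.sqrt K := by
        have h3 : ∑ k ∈ Finset.univ.filter (fun k : Fin N => k.val < K), w k.val
            = ∑ j ∈ (Finset.univ.filter (fun k : Fin N => k.val < K)).image Fin.val, w j := by
          rw [Finset.sum_image (fun a _ b _ h => Fin.val_injective h)]
        have h4 : (Finset.univ.filter (fun k : Fin N => k.val < K)).image Fin.val
            ⊆ Finset.range K := by
          intro j hj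
          simp only [Finset.mem_image, Finset.mem_filter] at hj
          obtain ⟨k, ⟨_, hk⟩, rfl⟩ := hj
          exact Finset.mem_range.2 hk
        calc ∑ k ∈ Finset.univ.filter (fun k : Fin N => k.val < K), w k.val
            = ∑ j ∈ (Finset.univ.filter (fun k : Fin N => k.val < K)).image Fin.val, w j := h3
          _ ≤ ∑ j ∈ Finset.range K, w j :=
              Finset.sum_le_sum_of_subset_of_nonneg h4 (fun j _ _ => w_nonneg j)
          _ = Real.sqrt K := sum_w K
      calc ∑ k ∈ Finset.univ.filter (fun k : Fin N => k.val < K), w k.val * |x (π k)|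
          ≤ ∑ k ∈ Finset.univ.filter (fun k : Fin N => k.val < K), w k.val * B' := h1
        _ = (∑ k ∈ Finset.univ.filter (fun k : Fin N => k.val < K), w k.val) * B' := by
            rw [Finset.sum_mul]
        _ ≤ Real.sqrt K * B' := mul_le_mul_of_nonneg_right h2 (le_of_lt hB'0)
        _ = B' * Real.sqrt K := mul_comm _ _
    have hS2 : ∑ k ∈ Finset.univ.filter (fun k : Fin N => ¬ k.val < K), w k.val * |x (π k)|
        ≤ L / (2 * Real.sqrt K) := by
      have h1 : ∑ k ∈ Finset.univ.filter (fun k : Fin N => ¬ k.val < K), w k.val * |x (π k)|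
          ≤ ∑ k ∈ Finset.univ.filter (fun k : Fin N => ¬ k.val < K), w K * |x (π k)| := by
        refine Finset.sum_le_sum fun k hk => ?_
        simp only [Finset.mem_filter] at hk
        exact mul_le_mul_of_nonneg_right (w_antitone (le_of_not_gt hk.2)) (abs_nonneg _)
      have h2 : ∑ k ∈ Finset.univ.filter (fun k : Fin N => ¬ k.val < K), w K * |x (π k)|
          ≤ w K * L := by
        rw [← Finset.mul_sum]
        refine mul_le_mul_of_nonneg_left ?_ (w_nonneg K)
        calc ∑ k ∈ Finset.univ.filter (fun k : Fin N => ¬ k.val < K), |x (π k)|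
            ≤ ∑ k : Fin N, |x (π k)| :=
              Finset.sum_le_sum_of_subset_of_nonneg (Finset.filter_subset _ _)
                (fun k _ _ => abs_nonneg _)
          _ = L := Equiv.sum_comp π (fun j => |x j|)
      have h3 : w K * L ≤ (1 / (2 * Real.sqrt K)) * L :=
        mul_le_mul_of_nonneg_right (w_le hK1) hL0
      calc ∑ k ∈ Finset.univ.filter (fun k : Fin N => ¬ k.val < K), w k.val * |x (π k)|
          ≤ w K * L := le_trans h1 h2
        _ ≤ (1 / (2 * Real.sqrt K)) * L := h3
        _ = L / (2 * Real.sqrt K) := by ring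
    linarith
  -- numeric bound
  have hb1 : B' * Real.sqrt K ≤ Real.sqrt 2 * Real.sqrt (B' * L) := by
    have hsq : (B' * Real.sqrt K) ^ 2 ≤ 2 * (B' * L) := by
      have e1 : (B' * Real.sqrt K) ^ 2 = B' ^ 2 * (K : ℝ) := by
        rw [mul_pow, Real.sq_sqrt (le_of_lt hKpos)]
      have e2 : B' ^ 2 * (K : ℝ) ≤ B' ^ 2 * (2 * (L / B')) :=
        mul_le_mul_of_nonneg_left hKle (sq_nonneg _)
      have e3 : B' ^ 2 * (2 * (L / B')) = 2 * (B' * L) := by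
        field_simp
      linarith
    have h1 : B' * Real.sqrt K = Real.sqrt ((B' * Real.sqrt K) ^ 2) :=
      (Real.sqrt_sq (by positivity)).symm
    rw [h1]
    calc Real.sqrt ((B' * Real.sqrt K) ^ 2) ≤ Real.sqrt (2 * (B' * L)) :=
        Real.sqrt_le_sqrt hsq
      _ = Real.sqrt 2 * Real.sqrt (B' * L) := Real.sqrt_mul (by norm_num) _
  have hb2 : L / (2 * Real.sqrt K) ≤ Real.sqrt (B' * L) / 2 := by
    have hsLB : Real.sqrt (L / B') ≤ Real.sqrt K := Real.sqrt_le_sqrt hKge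
    have hsLBpos : 0 < Real.sqrt (L / B') := Real.sqrt_pos.2 hdivpos
    have h1 : L / (2 * Real.sqrt K) ≤ L / (2 * Real.sqrt (L / B')) := by
      apply div_le_div_of_nonneg_left hL0 (by positivity)
      linarith
    have h2 : L / (2 * Real.sqrt (L / B')) = Real.sqrt (B' * L) / 2 := by
      have e1 : Real.sqrt (L / B') = Real.sqrt L / Real.sqrt B' := Real.sqrt_div hL0 _
      have e2 : Real.sqrt (B' * L) = Real.sqrt B' * Real.sqrt L :=
        Real.sqrt_mul (le_of_lt hB'0) _
      have hsL : Real.sqrt L * Real.sqrt L = L := Real.mul_self_sqrt hL0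
      have hsLpos : 0 < Real.sqrt L := Real.sqrt_pos.2 hLpos
      have hsBpos : 0 < Real.sqrt B' := Real.sqrt_pos.2 hB'0
      rw [e1, e2]
      field_simp
      nlinarith [hsL]
    linarith
  have hfin : B' * Real.sqrt K + L / (2 * Real.sqrt K) ≤ 2 * Real.sqrt (B' * L) := by
    have h0 : 0 ≤ Real.sqrt (B' * L) := Real.sqrt_nonneg _
    have := sqrt_two_le
    nlinarith [hb1, hb2]
  have hmono : Real.sqrt (B' * L) ≤ Real.sqrt (B * L) := by
    apply Real.sqrt_le_sqrt
    exact mul_le_mul_of_nonneg_right (min_le_left _ _) hL0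
  refine Gf_le _ fun π => ?_
  calc ∑ k, w k.val * |x (π k)| ≤ B' * Real.sqrt K + L / (2 * Real.sqrt K) := main π
    _ ≤ 2 * Real.sqrt (B' * L) := hfin
    _ ≤ 2 * Real.sqrt (B * L) := by linarith

lemma Gf_sq_le {N : ℕ} (x : Fin N → ℝ) {B : ℝ} (hB : ∀ k, |x k| ≤ B) :
    Gf N x ^ 2 ≤ 4 * (B * ∑ k, |x k|) := by
  have h1 := Gf_le_sqrt x hB
  have h2 : 0 ≤ Gf N x := Gf_nonneg x
  have h3 : 0 ≤ B * ∑ k, |x k| := by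
    rcases Nat.eq_zero_or_pos N with h | h
    · subst h; simp
    · have k0 : Fin N := ⟨0, h⟩
      have hB0 : 0 ≤ B := le_trans (abs_nonneg (x k0)) (hB k0)
      exact mul_nonneg hB0 (Finset.sum_nonneg fun k _ => abs_nonneg _)
  have h4 : Gf N x ^ 2 ≤ (2 * Real.sqrt (B * ∑ k, |x k|)) ^ 2 := by
    apply pow_le_pow_left₀ h2 h1
  have h5 : (2 * Real.sqrt (B * ∑ k, |x k|)) ^ 2 = 4 * (B * ∑ k, |x k|) := by
    rw [mul_pow, Real.sq_sqrt h3]; ring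
  linarith

end Stmt19Aux

namespace Stmt19Aux

noncomputable def HN (N : ℕ) : ℝ := ∑ i ∈ Finset.range N, ((i : ℝ) + 1)⁻¹

lemma HN_nonneg (N : ℕ) : 0 ≤ HN N :=
  Finset.sum_nonneg fun i _ => by positivity

lemma one_le_HN {N : ℕ} (hN : 1 ≤ N) : 1 ≤ HN N := by
  have h0 : ((0 : ℕ) : ℝ) + 1 = 1 := by norm_num
  have := Finset.single_le_sum (f := fun i : ℕ => ((i : ℝ) + 1)⁻¹)
    (fun i _ => by positivity) (Finset.mem_range.2 hN)
  simpa [HN] using this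

lemma HN_pos {N : ℕ} (hN : 1 ≤ N) : 0 < HN N := lt_of_lt_of_le one_pos (one_le_HN hN)

lemma log_le_HN {N : ℕ} (hN : 1 ≤ N) : Real.log N ≤ HN N := by
  have h1 : Real.log ((N : ℝ) + 1) ≤ (harmonic N : ℝ) := by
    have := log_add_one_le_harmonic N
    push_cast at this
    exact this
  have h2 : (harmonic N : ℝ) = HN N := by
    rw [harmonic, HN]
    push_cast
    rfl
  have h3 : Real.log N ≤ Real.log (N + 1) := by
    apply Real.log_le_log (by exact_mod_cast hN)
    push_cast; linarith
  calc Real.log N ≤ Real.log (N + 1) := h3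
    _ ≤ (harmonic N : ℝ) := by exact_mod_cast h1
    _ = HN N := h2

variable (N : ℕ) [NeZero N]

noncomputable def hvec : Fin N → ℝ := fun j => (Real.sqrt ((j.val : ℝ) + 1))⁻¹

noncomputable def xfam : Fin N → Fin N → ℝ := fun s k => hvec N (k + s)

variable {N}

lemma hvec_nonneg (j : Fin N) : 0 ≤ hvec N j := by
  unfold hvec; positivity

lemma hvec_sq (j : Fin N) : hvec N j ^ 2 = ((j.val : ℝ) + 1)⁻¹ := by
  unfold hvec
  rw [inv_pow, Real.sq_sqrt (by positivity : (0:ℝ) ≤ (j.val : ℝ) + 1)]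

lemma col_sum (k : Fin N) : ∑ s, (xfam N s k) ^ 2 = HN N := by
  unfold xfam
  have h1 : ∑ s : Fin N, hvec N (k + s) ^ 2 = ∑ t : Fin N, hvec N t ^ 2 :=
    Equiv.sum_comp (Equiv.addLeft k) (fun t => hvec N t ^ 2)
  rw [h1]
  have h2 : ∀ t : Fin N, hvec N t ^ 2 = ((t.val : ℝ) + 1)⁻¹ := hvec_sq
  rw [Finset.sum_congr rfl fun t _ => h2 t]
  exact Fin.sum_univ_eq_sum_range (fun i => ((i : ℝ) + 1)⁻¹) N

lemma Gf_xfam (s : Fin N) : HN N / 2 ≤ Gf N (xfam N s) := by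
  refine le_trans ?_ (le_Gf (xfam N s) (Equiv.subRight s))
  have h1 : ∀ k : Fin N, xfam N s (Equiv.subRight s k) = hvec N k := by
    intro k
    simp only [xfam, Equiv.subRight_apply, sub_add_cancel]
  have h2 : ∀ k : Fin N, (2 * ((k.val : ℝ) + 1))⁻¹ ≤ w k.val * |xfam N s (Equiv.subRight s k)| := by
    intro k
    rw [h1 k, abs_of_nonneg (hvec_nonneg k)]
    have h3 := w_ge k.val
    have h4 : 0 ≤ hvec N k := hvec_nonneg k
    have h5 : hvec N k = (Real.sqrt ((k.val : ℝ) + 1))⁻¹ := rfl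
    have hsp : 0 < Real.sqrt ((k.val : ℝ) + 1) := Real.sqrt_pos.2 (by positivity)
    have h6 : (2 * ((k.val : ℝ) + 1))⁻¹
        = (1 / (2 * Real.sqrt ((k.val : ℝ) + 1))) * (Real.sqrt ((k.val : ℝ) + 1))⁻¹ := by
      have := Real.mul_self_sqrt (by positivity : (0:ℝ) ≤ (k.val : ℝ) + 1)
      field_simp
      nlinarith [this]
    rw [h6, h5]
    exact mul_le_mul_of_nonneg_right h3 (by positivity)
  calc HN N / 2 = ∑ k : Fin N, (2 * ((k.val : ℝ) + 1))⁻¹ := by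
        rw [eq_comm]
        have : ∀ k : Fin N, (2 * ((k.val : ℝ) + 1))⁻¹ = ((k.val : ℝ) + 1)⁻¹ / 2 := by
          intro k; rw [mul_inv]; ring
        rw [Finset.sum_congr rfl fun k _ => this k, ← Finset.sum_div]
        congr 1
        exact Fin.sum_univ_eq_sum_range (fun i => ((i : ℝ) + 1)⁻¹) N
    _ ≤ ∑ k, w k.val * |xfam N s (Equiv.subRight s k)| := Finset.sum_le_sum fun k _ => h2 k

end Stmt19Aux

namespace Stmt19Aux

lemma ev_norm {N : ℕ} (k : Fin N) :
    ‖(ContinuousLinearMap.proj k : (Fin N → ℝ) →L[ℝ] ℝ)‖ ≤ 1 := by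
  refine ContinuousLinearMap.opNorm_le_bound _ zero_le_one fun x => ?_
  rw [one_mul, ContinuousLinearMap.proj_apply]
  exact norm_le_pi_norm x k

def bas (N : ℕ) (k : Fin N) : Fin N → ℝ := fun j => if k = j then 1 else 0

lemma f_apply {N : ℕ} (f : (Fin N → ℝ) →L[ℝ] ℝ) (x : Fin N → ℝ) :
    f x = ∑ k, x k * f (bas N k) := by
  conv_lhs => rw [pi_eq_sum_univ x]
  rw [map_sum]
  exact Finset.sum_congr rfl fun k _ => by rw [map_smul, smul_eq_mul]; rfl

lemma sum_abs_coef {N : ℕ} {f : (Fin N → ℝ) →L[ℝ] ℝ} (hf : ‖f‖ ≤ 1) :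
    ∑ k, |f (bas N k)| ≤ 1 := by
  classical
  set z : Fin N → ℝ := fun k => if 0 ≤ f (bas N k) then 1 else -1 with hz
  have hznorm : ‖z‖ ≤ 1 := by
    refine (pi_norm_le_iff_of_nonneg zero_le_one).2 fun k => ?_
    rw [Real.norm_eq_abs]
    by_cases h : 0 ≤ f (bas N k) <;> simp [hz, h]
  have hfz : f z = ∑ k, |f (bas N k)| := by
    rw [f_apply f z]
    refine Finset.sum_congr rfl fun k _ => ?_
    by_cases h : 0 ≤ f (bas N k)
    · simp [hz, h, abs_of_nonneg h]
    · push_neg at h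
      simp [hz, h, abs_of_neg h, not_le.2 h]
  calc ∑ k, |f (bas N k)| = f z := hfz.symm
    _ ≤ |f z| := le_abs_self _
    _ = ‖f z‖ := (Real.norm_eq_abs _).symm
    _ ≤ ‖f‖ * ‖z‖ := f.le_opNorm z
    _ ≤ 1 * 1 := mul_le_mul hf hznorm (norm_nonneg _) zero_le_one
    _ = 1 := one_mul 1

lemma pinorm_sq_le {N : ℕ} (v : Fin N → ℝ) : ‖v‖ ^ 2 ≤ ∑ k, v k ^ 2 := by
  have h1 : ‖v‖ ≤ Real.sqrt (∑ k, v k ^ 2) := by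
    refine (pi_norm_le_iff_of_nonneg (Real.sqrt_nonneg _)).2 fun j => ?_
    rw [Real.norm_eq_abs, ← Real.sqrt_sq_eq_abs]
    exact Real.sqrt_le_sqrt (Finset.single_le_sum (f := fun k => v k ^ 2)
      (fun k _ => sq_nonneg _) (Finset.mem_univ j))
  have h2 : 0 ≤ ∑ k, v k ^ 2 := Finset.sum_nonneg fun k _ => sq_nonneg _
  calc ‖v‖ ^ 2 ≤ Real.sqrt (∑ k, v k ^ 2) ^ 2 := pow_le_pow_left₀ (norm_nonneg _) h1 2
    _ = ∑ k, v k ^ 2 := Real.sq_sqrt h2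

end Stmt19Aux

namespace Stmt19Aux

lemma summing21 (N : ℕ) [NeZero N] : Summing21 (Tmap N) (2 * Real.sqrt N) := by
  intro S x
  set A := sSup {r : ℝ | ∃ f : (Fin N → ℝ) →L[ℝ] ℝ, ‖f‖ ≤ 1 ∧ r = ∑ s, |f (x s)|} with hA
  have hbdd : BddAbove {r : ℝ | ∃ f : (Fin N → ℝ) →L[ℝ] ℝ, ‖f‖ ≤ 1 ∧ r = ∑ s, |f (x s)|} := by
    refine ⟨∑ s, ‖x s‖, ?_⟩
    rintro r ⟨f, hf, rfl⟩
    refine Finset.sum_le_sum fun s _ => ?_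
    calc |f (x s)| = ‖f (x s)‖ := (Real.norm_eq_abs _).symm
      _ ≤ ‖f‖ * ‖x s‖ := f.le_opNorm _
      _ ≤ 1 * ‖x s‖ := mul_le_mul_of_nonneg_right hf (norm_nonneg _)
      _ = ‖x s‖ := one_mul _
  have hcol : ∀ k : Fin N, ∑ s, |x s k| ≤ A := by
    intro k
    refine le_csSup hbdd ⟨ContinuousLinearMap.proj k, ev_norm k, ?_⟩
    simp [ContinuousLinearMap.proj_apply]
  have hA0 : 0 ≤ A := by
    have k0 : Fin N := ⟨0, Nat.pos_of_ne_zero (NeZero.ne N)⟩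
    exact le_trans (Finset.sum_nonneg fun s _ => abs_nonneg _) (hcol k0)
  have hBs : ∀ (s : Fin S) (k : Fin N), |x s k| ≤ A := by
    intro s k
    refine le_trans ?_ (hcol k)
    exact Finset.single_le_sum (f := fun s' => |x s' k|) (fun s' _ => abs_nonneg _)
      (Finset.mem_univ s)
  have hsum : ∑ s, ‖Tmap N (x s)‖ ^ 2 ≤ 4 * (N : ℝ) * A ^ 2 := by
    have h1 : ∀ s : Fin S, ‖Tmap N (x s)‖ ^ 2 ≤ 4 * (A * ∑ k, |x s k|) := by
      intro s
      rw [Tmap_norm]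
      exact Gf_sq_le (x s) (hBs s)
    calc ∑ s, ‖Tmap N (x s)‖ ^ 2 ≤ ∑ s, 4 * (A * ∑ k, |x s k|) :=
        Finset.sum_le_sum fun s _ => h1 s
      _ = 4 * A * ∑ s, ∑ k, |x s k| := by
          rw [mul_comm (4 * A)  (∑ s, ∑ k, |x s k|), Finset.sum_mul]
          refine Finset.sum_congr rfl fun s _ => by ring
      _ = 4 * A * ∑ k : Fin N, ∑ s, |x s k| := by rw [Finset.sum_comm]
      _ ≤ 4 * A * ∑ k : Fin N, A := by
          refine mul_le_mul_of_nonneg_left (Finset.sum_le_sum fun k _ => hcol k) (by linarith)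
      _ = 4 * A * ((N : ℝ) * A) := by
          rw [Finset.sum_const, Finset.card_univ, Fintype.card_fin, nsmul_eq_mul]
      _ = 4 * (N : ℝ) * A ^ 2 := by ring
  calc Real.sqrt (∑ s, ‖Tmap N (x s)‖ ^ 2) ≤ Real.sqrt (4 * (N : ℝ) * A ^ 2) :=
      Real.sqrt_le_sqrt hsum
    _ = 2 * Real.sqrt N * A := by
        rw [show 4 * (N : ℝ) * A ^ 2 = (2 * Real.sqrt N * A) ^ 2 by
          rw [mul_pow, mul_pow, Real.sq_sqrt (Nat.cast_nonneg N)]; ring]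
        exact Real.sqrt_sq (by positivity)

lemma summing2_big (N : ℕ) [NeZero N] : Summing2 (Tmap N) N := by
  intro S x
  set B := sSup {r : ℝ | ∃ f : (Fin N → ℝ) →L[ℝ] ℝ, ‖f‖ ≤ 1 ∧
    r = Real.sqrt (∑ s, |f (x s)| ^ 2)} with hB
  have hbdd : BddAbove {r : ℝ | ∃ f : (Fin N → ℝ) →L[ℝ] ℝ, ‖f‖ ≤ 1 ∧
      r = Real.sqrt (∑ s, |f (x s)| ^ 2)} := by
    refine ⟨Real.sqrt (∑ s, ‖x s‖ ^ 2), ?_⟩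
    rintro r ⟨f, hf, rfl⟩
    refine Real.sqrt_le_sqrt (Finset.sum_le_sum fun s _ => ?_)
    refine pow_le_pow_left₀ (abs_nonneg _) ?_ 2
    calc |f (x s)| = ‖f (x s)‖ := (Real.norm_eq_abs _).symm
      _ ≤ ‖f‖ * ‖x s‖ := f.le_opNorm _
      _ ≤ 1 * ‖x s‖ := mul_le_mul_of_nonneg_right hf (norm_nonneg _)
      _ = ‖x s‖ := one_mul _
  have hcol : ∀ k : Fin N, ∑ s, x s k ^ 2 ≤ B ^ 2 := by
    intro k
    have h1 : Real.sqrt (∑ s, |x s k| ^ 2) ≤ B := by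
      refine le_csSup hbdd ⟨ContinuousLinearMap.proj k, ev_norm k, ?_⟩
      simp [ContinuousLinearMap.proj_apply]
    have h2 : (0:ℝ) ≤ ∑ s, |x s k| ^ 2 := Finset.sum_nonneg fun s _ => sq_nonneg _
    have h3 : ∑ s, |x s k| ^ 2 ≤ B ^ 2 := by
      calc ∑ s, |x s k| ^ 2 = Real.sqrt (∑ s, |x s k| ^ 2) ^ 2 := (Real.sq_sqrt h2).symm
        _ ≤ B ^ 2 := pow_le_pow_left₀ (Real.sqrt_nonneg _) h1 2
    calc ∑ s, x s k ^ 2 = ∑ s, |x s k| ^ 2 := by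
          exact Finset.sum_congr rfl fun s _ => (sq_abs _).symm
      _ ≤ B ^ 2 := h3
  have hB0 : 0 ≤ B := by
    have k0 : Fin N := ⟨0, Nat.pos_of_ne_zero (NeZero.ne N)⟩
    have h1 : Real.sqrt (∑ s, |x s k0| ^ 2) ≤ B := by
      refine le_csSup hbdd ⟨ContinuousLinearMap.proj k0, ev_norm k0, ?_⟩
      simp [ContinuousLinearMap.proj_apply]
    exact le_trans (Real.sqrt_nonneg _) h1
  have hsum : ∑ s, ‖Tmap N (x s)‖ ^ 2 ≤ (N : ℝ) ^ 2 * B ^ 2 := by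
    have h1 : ∀ s : Fin S, ‖Tmap N (x s)‖ ^ 2 ≤ (N : ℝ) * ∑ k, x s k ^ 2 := by
      intro s
      rw [Tmap_norm]
      calc Gf N (x s) ^ 2 ≤ (Real.sqrt N * ‖x s‖) ^ 2 :=
          pow_le_pow_left₀ (Gf_nonneg _) (Gf_le_pinorm (x s)) 2
        _ = (N : ℝ) * ‖x s‖ ^ 2 := by
            rw [mul_pow, Real.sq_sqrt (Nat.cast_nonneg N)]
        _ ≤ (N : ℝ) * ∑ k, x s k ^ 2 :=
            mul_le_mul_of_nonneg_left (pinorm_sq_le (x s)) (Nat.cast_nonneg N)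
    calc ∑ s, ‖Tmap N (x s)‖ ^ 2 ≤ ∑ s, (N : ℝ) * ∑ k, x s k ^ 2 :=
        Finset.sum_le_sum fun s _ => h1 s
      _ = (N : ℝ) * ∑ k : Fin N, ∑ s, x s k ^ 2 := by
          rw [← Finset.mul_sum, Finset.sum_comm]
      _ ≤ (N : ℝ) * ∑ k : Fin N, B ^ 2 :=
          mul_le_mul_of_nonneg_left (Finset.sum_le_sum fun k _ => hcol k) (Nat.cast_nonneg N)
      _ = (N : ℝ) ^ 2 * B ^ 2 := by
          rw [Finset.sum_const, Finset.card_univ, Fintype.card_fin, nsmul_eq_mul]; ring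
  calc Real.sqrt (∑ s, ‖Tmap N (x s)‖ ^ 2) ≤ Real.sqrt ((N : ℝ) ^ 2 * B ^ 2) :=
      Real.sqrt_le_sqrt hsum
    _ = (N : ℝ) * B := by
        rw [show (N : ℝ) ^ 2 * B ^ 2 = ((N : ℝ) * B) ^ 2 by ring]
        exact Real.sqrt_sq (by positivity)

end Stmt19Aux

namespace Stmt19Aux

lemma core_cs {N : ℕ} [NeZero N] {f : (Fin N → ℝ) →L[ℝ] ℝ} (hf : ‖f‖ ≤ 1) :
    ∑ s : Fin N, |f (xfam N s)| ^ 2 ≤ HN N := by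
  classical
  set c : Fin N → ℝ := fun k => f (bas N k) with hc
  have hcsum : ∑ k, |c k| ≤ 1 := sum_abs_coef hf
  have hper : ∀ s : Fin N, |f (xfam N s)| ^ 2 ≤ ∑ k, |c k| * xfam N s k ^ 2 := by
    intro s
    have h0 : |f (xfam N s)| ≤ ∑ k, |c k| * |xfam N s k| := by
      rw [f_apply f (xfam N s)]
      calc |∑ k, xfam N s k * c k| ≤ ∑ k, |xfam N s k * c k| :=
          Finset.abs_sum_le_sum_abs _ _
        _ = ∑ k, |c k| * |xfam N s k| := by
            refine Finset.sum_congr rfl fun k _ => ?_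
            rw [abs_mul]; ring
    have h1 : |f (xfam N s)| ^ 2 ≤ (∑ k, |c k| * |xfam N s k|) ^ 2 :=
      pow_le_pow_left₀ (abs_nonneg _) h0 2
    have h2 : (∑ k, |c k| * |xfam N s k|) ^ 2
        ≤ (∑ k, |c k|) * ∑ k, |c k| * xfam N s k ^ 2 := by
      have hcs := sum_mul_sq_le_sq_mul_sq Finset.univ
        (fun k => Real.sqrt |c k|) (fun k => Real.sqrt |c k| * |xfam N s k|)
      have e1 : ∀ k : Fin N, Real.sqrt |c k| * (Real.sqrt |c k| * |xfam N s k|)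
          = |c k| * |xfam N s k| := by
        intro k
        rw [← mul_assoc, Real.mul_self_sqrt (abs_nonneg _)]
      have e2 : ∀ k : Fin N, Real.sqrt |c k| ^ 2 = |c k| := fun k =>
        Real.sq_sqrt (abs_nonneg _)
      have e3 : ∀ k : Fin N, (Real.sqrt |c k| * |xfam N s k|) ^ 2
          = |c k| * xfam N s k ^ 2 := by
        intro k
        rw [mul_pow, Real.sq_sqrt (abs_nonneg _), sq_abs]
      rw [Finset.sum_congr rfl fun k _ => e1 k] at hcs
      rw [Finset.sum_congr rfl fun k _ => e2 k] at hcs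
      rw [Finset.sum_congr rfl fun k _ => e3 k] at hcs
      exact hcs
    have hXnn : 0 ≤ ∑ k, |c k| * xfam N s k ^ 2 :=
      Finset.sum_nonneg fun k _ => mul_nonneg (abs_nonneg _) (sq_nonneg _)
    have h3 : (∑ k, |c k|) * (∑ k, |c k| * xfam N s k ^ 2)
        ≤ ∑ k, |c k| * xfam N s k ^ 2 := by
      calc (∑ k, |c k|) * (∑ k, |c k| * xfam N s k ^ 2)
          ≤ 1 * (∑ k, |c k| * xfam N s k ^ 2) := mul_le_mul_of_nonneg_right hcsum hXnn
        _ = ∑ k, |c k| * xfam N s k ^ 2 := one_mul _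
    linarith
  calc ∑ s : Fin N, |f (xfam N s)| ^ 2 ≤ ∑ s : Fin N, ∑ k, |c k| * xfam N s k ^ 2 :=
      Finset.sum_le_sum fun s _ => hper s
    _ = ∑ k, |c k| * ∑ s : Fin N, xfam N s k ^ 2 := by
        rw [Finset.sum_comm]
        exact Finset.sum_congr rfl fun k _ => (Finset.mul_sum _ _ _).symm
    _ = ∑ k, |c k| * HN N := Finset.sum_congr rfl fun k _ => by rw [col_sum k]
    _ = (∑ k, |c k|) * HN N := by rw [Finset.sum_mul]
    _ ≤ 1 * HN N := mul_le_mul_of_nonneg_right hcsum (HN_nonneg N)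
    _ = HN N := one_mul _

end Stmt19Aux

theorem stmt19 :
    ∃ c : ℝ, 0 < c ∧
      ∀ (N : ℕ), 2 ≤ N →
        ∃ (Y : Type) (_ : NormedAddCommGroup Y) (_ : NormedSpace ℝ Y)
          (_ : CompleteSpace Y) (T : (Fin N → ℝ) →L[ℝ] Y),
          T ≠ 0 ∧
          sInf {C : ℝ | 0 ≤ C ∧ Summing2 T C} ≥
            c⁻¹ * Real.sqrt (Real.logb 2 N) *
              sInf {C : ℝ | 0 ≤ C ∧ Summing21 T C} := by
  classical
  refine ⟨8, by norm_num, ?_⟩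
  intro N hN
  haveI : NeZero N := ⟨by omega⟩
  have hN1 : 1 ≤ N := by omega
  have hNpos : 0 < N := by omega
  refine ⟨Stmt19Aux.LY N, inferInstance, inferInstance, inferInstance,
    Stmt19Aux.Tmap N, ?_, ?_⟩
  · -- T ≠ 0
    intro h
    set k0 : Fin N := ⟨0, hNpos⟩ with hk0
    have h1 : |Stmt19Aux.bas N k0 k0| ≤ Stmt19Aux.Gf N (Stmt19Aux.bas N k0) :=
      Stmt19Aux.abs_le_Gf _ k0
    have h2 : Stmt19Aux.bas N k0 k0 = 1 := by simp [Stmt19Aux.bas]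
    have h3 : ‖Stmt19Aux.Tmap N (Stmt19Aux.bas N k0)‖ = Stmt19Aux.Gf N (Stmt19Aux.bas N k0) :=
      Stmt19Aux.Tmap_norm _
    rw [h] at h3
    simp only [ContinuousLinearMap.zero_apply, norm_zero] at h3
    rw [h2] at h1
    rw [← h3] at h1
    norm_num at h1
  · -- main inequality
    have h21le : sInf {C : ℝ | 0 ≤ C ∧ Summing21 (Stmt19Aux.Tmap N) C}
        ≤ 2 * Real.sqrt N := by
      refine csInf_le ⟨0, fun C hC => hC.1⟩ ?_
      exact ⟨by positivity, Stmt19Aux.summing21 N⟩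
    have h21nn : 0 ≤ sInf {C : ℝ | 0 ≤ C ∧ Summing21 (Stmt19Aux.Tmap N) C} :=
      Real.sInf_nonneg fun C hC => hC.1
    have hHpos : 0 < Stmt19Aux.HN N := Stmt19Aux.HN_pos hN1
    have hsHpos : 0 < Real.sqrt (Stmt19Aux.HN N) := Real.sqrt_pos.2 hHpos
    have hA2 : Real.sqrt N * Real.sqrt (Stmt19Aux.HN N) / 2
        ≤ sInf {C : ℝ | 0 ≤ C ∧ Summing2 (Stmt19Aux.Tmap N) C} := by
      refine le_csInf ⟨(N : ℝ), Nat.cast_nonneg N, Stmt19Aux.summing2_big N⟩ ?_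
      rintro C ⟨hC0, hCs⟩
      have h := hCs N (Stmt19Aux.xfam N)
      -- lower bound of LHS
      have hlow : Real.sqrt N * (Stmt19Aux.HN N / 2)
          ≤ Real.sqrt (∑ s : Fin N, ‖Stmt19Aux.Tmap N (Stmt19Aux.xfam N s)‖ ^ 2) := by
        have h1 : ∀ s : Fin N, (Stmt19Aux.HN N / 2) ^ 2 ≤ ‖Stmt19Aux.Tmap N (Stmt19Aux.xfam N s)‖ ^ 2 := by
          intro s
          rw [Stmt19Aux.Tmap_norm]
          exact pow_le_pow_left₀ (by positivity) (Stmt19Aux.Gf_xfam s) 2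
        have h2 : (N : ℝ) * (Stmt19Aux.HN N / 2) ^ 2
            ≤ ∑ s : Fin N, ‖Stmt19Aux.Tmap N (Stmt19Aux.xfam N s)‖ ^ 2 := by
          calc (N : ℝ) * (Stmt19Aux.HN N / 2) ^ 2 = ∑ _s : Fin N, (Stmt19Aux.HN N / 2) ^ 2 := by
                rw [Finset.sum_const, Finset.card_univ, Fintype.card_fin, nsmul_eq_mul]
            _ ≤ ∑ s : Fin N, ‖Stmt19Aux.Tmap N (Stmt19Aux.xfam N s)‖ ^ 2 :=
                Finset.sum_le_sum fun s _ => h1 s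
        calc Real.sqrt N * (Stmt19Aux.HN N / 2) = Real.sqrt ((N : ℝ) * (Stmt19Aux.HN N / 2) ^ 2) := by
              rw [Real.sqrt_mul (Nat.cast_nonneg N), Real.sqrt_sq (by positivity)]
          _ ≤ Real.sqrt (∑ s : Fin N, ‖Stmt19Aux.Tmap N (Stmt19Aux.xfam N s)‖ ^ 2) :=
              Real.sqrt_le_sqrt h2
      -- upper bound of sSup
      have hsup : sSup {r : ℝ | ∃ f : (Fin N → ℝ) →L[ℝ] ℝ, ‖f‖ ≤ 1 ∧
          r = Real.sqrt (∑ s : Fin N, |f (Stmt19Aux.xfam N s)| ^ 2)}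
          ≤ Real.sqrt (Stmt19Aux.HN N) := by
        refine csSup_le ⟨_, ⟨0, by simp, rfl⟩⟩ ?_
        rintro r ⟨f, hf, rfl⟩
        exact Real.sqrt_le_sqrt (Stmt19Aux.core_cs hf)
      have hchain : Real.sqrt N * (Stmt19Aux.HN N / 2) ≤ C * Real.sqrt (Stmt19Aux.HN N) :=
        le_trans (le_trans hlow h) (mul_le_mul_of_nonneg_left hsup hC0)
      have e : (Real.sqrt N * Real.sqrt (Stmt19Aux.HN N) / 2) * Real.sqrt (Stmt19Aux.HN N)
          = Real.sqrt N * (Stmt19Aux.HN N / 2) := by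
        have hm := Real.mul_self_sqrt (le_of_lt hHpos)
        linear_combination (Real.sqrt N / 2) * hm
      refine le_of_mul_le_mul_right ?_ hsHpos
      rw [e]
      exact hchain
    -- logarithm comparison
    have hlog : Real.logb 2 N ≤ 4 * Stmt19Aux.HN N := by
      rw [Real.logb]
      have h2 : (0.6931471803 : ℝ) < Real.log 2 := Real.log_two_gt_d9
      have hlN : 0 ≤ Real.log N := Real.log_nonneg (by exact_mod_cast hN1)
      have hH := Stmt19Aux.log_le_HN hN1
      rw [div_le_iff₀ (by linarith)]
      nlinarith [Stmt19Aux.HN_nonneg N]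
    have hsqrtlog : Real.sqrt (Real.logb 2 N) ≤ 2 * Real.sqrt (Stmt19Aux.HN N) := by
      have h4 : Real.sqrt (4 : ℝ) = 2 := by
        rw [show (4 : ℝ) = 2 ^ 2 by norm_num, Real.sqrt_sq (by norm_num)]
      calc Real.sqrt (Real.logb 2 N) ≤ Real.sqrt (4 * Stmt19Aux.HN N) := Real.sqrt_le_sqrt hlog
        _ = 2 * Real.sqrt (Stmt19Aux.HN N) := by
            rw [Real.sqrt_mul (by norm_num), h4]
    rw [ge_iff_le]
    calc (8 : ℝ)⁻¹ * Real.sqrt (Real.logb 2 N)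
          * sInf {C : ℝ | 0 ≤ C ∧ Summing21 (Stmt19Aux.Tmap N) C}
        ≤ (8 : ℝ)⁻¹ * (2 * Real.sqrt (Stmt19Aux.HN N)) * (2 * Real.sqrt N) := by
          refine mul_le_mul ?_ h21le h21nn (by positivity)
          exact mul_le_mul_of_nonneg_left hsqrtlog (by norm_num)
      _ = Real.sqrt N * Real.sqrt (Stmt19Aux.HN N) / 2 := by ring
      _ ≤ sInf {C : ℝ | 0 ≤ C ∧ Summing2 (Stmt19Aux.Tmap N) C} := hA2
end
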